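/- arXiv:2102.03081 — 13 statements merged into one kernel-verified Lean document; each statement's English description precedes it below -/
import Mathlib

section
/- (Strongly absolute bases have the uniform peaking property, Remark 4.4 of the paper.) Let N be a normalized K-unconditional coefficient quasi-norm that is strongly absolute with function α. For a finitely supported g : ℕ → ℝ define the dual norm N*(g) = sup{ |∑_n g(n)·f(n)| : f finitely supported, N(f) ≤ 1 }. Then for all finitely supported f, g and every C ≥ 1 such that N*(g)·N(f) ≤ C·|∑_n g(n)·f(n)|, one has |∑_n g(n)·f(n)| ≤ α(2CK)·sup_n |g(n)·f(n)|. -/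
/-- A normalized `K`-unconditional coefficient quasi-norm on finitely supported
real sequences. -/
structure IsCoeffQuasiNorm (K : ℝ) (N : (ℕ →₀ ℝ) → ℝ) : Prop where
  nonneg : ∀ f, 0 ≤ N f
  eq_zero_iff : ∀ f, N f = 0 ↔ f = 0
  smul : ∀ (t : ℝ) (f : ℕ →₀ ℝ), N (t • f) = |t| * N f
  normalized : ∀ n : ℕ, N (Finsupp.single n 1) = 1
  uncond : ∀ f g : ℕ →₀ ℝ, (∀ n, |f n| ≤ |g n|) → N f ≤ K * N g

/-- `N` is strongly absolute with function `α`. -/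
def StronglyAbsolute (N : (ℕ →₀ ℝ) → ℝ) (α : ℝ → ℝ) : Prop :=
  ∀ R : ℝ, 0 < R → ∀ f : ℕ →₀ ℝ,
    ∑ n ∈ f.support, |f n| ≤ max (α R * ⨆ n, |f n|) (N f / R)

/-- The dual norm `N*(g) = sup { |∑ₙ g n · f n| : N f ≤ 1 }`. -/
noncomputable def dualNorm (N : (ℕ →₀ ℝ) → ℝ) (g : ℕ →₀ ℝ) : ℝ :=
  sSup {x | ∃ f : ℕ →₀ ℝ, N f ≤ 1 ∧ x = |∑ n ∈ g.support, g n * f n|}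

/-- Remark 4.4: strongly absolute bases have the uniform peaking
property: if `N*(g)·N(f) ≤ C·|⟨g,f⟩|` then `|⟨g,f⟩| ≤ α(2CK)·supₙ |g n · f n|`. -/
theorem stmt2 (K : ℝ) (hK : 1 ≤ K) (N : (ℕ →₀ ℝ) → ℝ) (α : ℝ → ℝ)
    (hα : ∀ R : ℝ, 0 < R → 0 < α R)
    (hN : IsCoeffQuasiNorm K N) (hSA : StronglyAbsolute N α) :
    ∀ f g : ℕ →₀ ℝ, ∀ C : ℝ, 1 ≤ C →
      dualNorm N g * N f ≤ C * |∑ n ∈ g.support, g n * f n| →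
      |∑ n ∈ g.support, g n * f n| ≤ α (2 * C * K) * ⨆ n, |g n * f n| := by
  intro f g C hC hle
  set P := |∑ n ∈ g.support, g n * f n| with hPdef
  have hK0 : (0:ℝ) < K := lt_of_lt_of_le one_pos hK
  have hC0 : (0:ℝ) < C := lt_of_lt_of_le one_pos hC
  set h : ℕ →₀ ℝ := g * f with hhdef
  have hhap : ∀ n, h n = g n * f n := fun n => Finsupp.mul_apply
  -- coordinates bounded by K for N f' ≤ 1
  have hcoord : ∀ f' : ℕ →₀ ℝ, N f' ≤ 1 → ∀ n, |f' n| ≤ K := by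
    intro f' hf' n
    have h1 : Finsupp.single n (f' n) = f' n • Finsupp.single n (1:ℝ) := by
      rw [Finsupp.smul_single, smul_eq_mul, mul_one]
    have h2 : N (Finsupp.single n (f' n)) = |f' n| := by
      rw [h1, hN.smul, hN.normalized, mul_one]
    have h3 : N (Finsupp.single n (f' n)) ≤ K * N f' := by
      apply hN.uncond
      intro m
      rcases eq_or_ne n m with rfl | hnm
      · simp
      · simp [Finsupp.single_apply, hnm, abs_nonneg]
    calc |f' n| = N (Finsupp.single n (f' n)) := h2.symm
      _ ≤ K * N f' := h3
      _ ≤ K * 1 := by nlinarith [hN.nonneg f']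
      _ = K := mul_one K
  -- the defining set of the dual norm
  set S := {x | ∃ f' : ℕ →₀ ℝ, N f' ≤ 1 ∧ x = |∑ n ∈ g.support, g n * f' n|} with hSdef
  have hbdd : BddAbove S := by
    refine ⟨∑ n ∈ g.support, |g n| * K, ?_⟩
    rintro x ⟨f', hf', rfl⟩
    calc |∑ n ∈ g.support, g n * f' n| ≤ ∑ n ∈ g.support, |g n * f' n| :=
          Finset.abs_sum_le_sum_abs _ _
      _ ≤ ∑ n ∈ g.support, |g n| * K := by
          apply Finset.sum_le_sum
          intro n _
          rw [abs_mul]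
          exact mul_le_mul_of_nonneg_left (hcoord f' hf' n) (abs_nonneg _)
  have hzeroS : (0:ℝ) ∈ S := by
    refine ⟨0, ?_, by simp⟩
    rw [(hN.eq_zero_iff 0).mpr rfl]; norm_num
  have hdnn : 0 ≤ dualNorm N g := le_csSup hbdd hzeroS
  have hginf : ∀ m, |g m| ≤ dualNorm N g := by
    intro m
    by_cases hm : m ∈ g.support
    · have hmem : |g m| ∈ S := by
        refine ⟨Finsupp.single m 1, le_of_eq (hN.normalized m), ?_⟩
        congr 1
        rw [Finset.sum_eq_single m]
        · simp
        · intro n _ hnm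
          simp [Finsupp.single_apply, Ne.symm hnm]
        · intro hmn; exact absurd hm hmn
      exact le_csSup hbdd hmem
    · rw [Finsupp.notMem_support_iff.mp hm, abs_zero]
      exact hdnn
  -- bound N h
  have hNh : N h ≤ K * (dualNorm N g * N f) := by
    have := hN.uncond h (dualNorm N g • f) (by
      intro n
      rw [hhap, Finsupp.smul_apply, smul_eq_mul, abs_mul, abs_mul,
        abs_of_nonneg hdnn]
      exact mul_le_mul_of_nonneg_right (hginf n) (abs_nonneg _))
    rwa [hN.smul, abs_of_nonneg hdnn] at this
  have hNhP : N h ≤ K * (C * P) :=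
    le_trans hNh (mul_le_mul_of_nonneg_left hle (le_of_lt hK0))
  set R := 2 * C * K with hRdef
  have hR : 0 < R := by positivity
  have hsum := hSA R hR h
  have hPnn : 0 ≤ P := abs_nonneg _
  -- P ≤ sum of |h n| over h.support
  have hsub : h.support ⊆ g.support := by
    intro n hn
    rw [Finsupp.mem_support_iff] at hn ⊢
    intro hg
    exact hn (by rw [hhap, hg, zero_mul])
  have hPsum : P ≤ ∑ n ∈ h.support, |h n| := by
    calc P ≤ ∑ n ∈ g.support, |g n * f n| := Finset.abs_sum_le_sum_abs _ _
      _ = ∑ n ∈ g.support, |h n| := by simp only [hhap]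
      _ = ∑ n ∈ h.support, |h n| := by
          refine (Finset.sum_subset hsub ?_).symm
          intro n _ hn
          rw [Finsupp.notMem_support_iff.mp hn, abs_zero]
  have hdiv : N h / R ≤ P / 2 := by
    rw [div_le_div_iff₀ hR two_pos]
    calc N h * 2 ≤ (K * (C * P)) * 2 := by linarith
      _ = P * R := by rw [hRdef]; ring
  have hTnn : 0 ≤ ⨆ n, |h n| := Real.iSup_nonneg fun n => abs_nonneg _
  have hT : (⨆ n, |h n|) = ⨆ n, |g n * f n| := by simp only [hhap]
  have hkey : P ≤ max (α R * ⨆ n, |h n|) (P / 2) :=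
    le_trans hPsum (le_trans hsum (max_le_max le_rfl hdiv))
  rcases le_max_iff.mp hkey with hc | hc
  · rwa [hT] at hc
  · have hP0 : P = 0 := by linarith
    rw [hP0]
    have := hα R hR
    rw [← hT]
    positivity
end

section
/- (Proposition 3.13 of the paper: infinite direct sums of strongly absolute bases are strongly absolute.) Let Λ be a normalized 1-unconditional coefficient quasi-norm (the sequence space) that is strongly absolute with function β, and for each j ∈ ℕ let N_j be a normalized K-unconditional coefficient quasi-norm that is strongly absolute with the same function α. Let D ≥ 1 be such that ∑_n |f(n)| ≤ D·N_j(f) for every j and every finitely supported f. For a finitely supported F : ℕ × ℕ → ℝ define the direct-sum quasi-norm M(F) = Λ(j ↦ N_j(F(j,·))). Then for every R > 0 and every finitely supported F, ∑_{j,n} |F(j,n)| ≤ max( β(R·D)·α(R·β(R·D))·sup_{j,n} |F(j,n)|, M(F)/R ); that is, M is strongly absolute with function R ↦ β(R·D)·α(R·β(R·D)). -/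
/-- Proposition 3.13: infinite direct sums of strongly absolute bases
are strongly absolute.  A finitely supported `F : ℕ × ℕ → ℝ` is encoded as
`F : ℕ →₀ (ℕ →₀ ℝ)`; the direct-sum quasi-norm is `M F = Λ (j ↦ N_j (F j))`, where
`G : ℕ →₀ ℝ` with `G j = N_j (F j)` for all `j` represents the inner sequence. -/
theorem stmt3 (K D : ℝ) (hK : 1 ≤ K) (hD : 1 ≤ D)
    (Λ : (ℕ →₀ ℝ) → ℝ) (β : ℝ → ℝ) (hΛ : IsCoeffQuasiNorm 1 Λ)
    (hβ : ∀ R : ℝ, 0 < R → 0 < β R) (hΛSA : StronglyAbsolute Λ β)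
    (Nf : ℕ → (ℕ →₀ ℝ) → ℝ) (α : ℝ → ℝ) (hα : ∀ R : ℝ, 0 < R → 0 < α R)
    (hNf : ∀ j, IsCoeffQuasiNorm K (Nf j))
    (hNfSA : ∀ j, StronglyAbsolute (Nf j) α)
    (hdom : ∀ (j : ℕ) (f : ℕ →₀ ℝ), ∑ n ∈ f.support, |f n| ≤ D * Nf j f) :
    ∀ R : ℝ, 0 < R → ∀ F : ℕ →₀ (ℕ →₀ ℝ), ∀ G : ℕ →₀ ℝ,
      (∀ j, G j = Nf j (F j)) →
      ∑ j ∈ F.support, ∑ n ∈ (F j).support, |F j n| ≤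
        max (β (R * D) * α (R * β (R * D)) * ⨆ j, ⨆ n, |F j n|) (Λ G / R) := by
  intro R hR F G hG
  have hDpos : (0:ℝ) < D := lt_of_lt_of_le one_pos hD
  have hRD : 0 < R * D := mul_pos hR hDpos
  set B := β (R * D) with hB
  have hBpos : 0 < B := hβ _ hRD
  have hR2 : 0 < R * B := mul_pos hR hBpos
  have hGnn : ∀ j, 0 ≤ G j := fun j => (hG j) ▸ (hNf j).nonneg _
  set H : ℕ →₀ ℝ := F.mapRange (fun f => ∑ n ∈ f.support, |f n|) (by simp) with hHdef
  have hHval : ∀ j, H j = ∑ n ∈ (F j).support, |F j n| := fun j => rfl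
  have hHnn : ∀ j, 0 ≤ H j := fun j => by
    rw [hHval]; exact Finset.sum_nonneg fun n _ => abs_nonneg _
  have hth : ∀ j, H j ≤ D * G j := fun j => by
    rw [hHval, hG]; exact hdom j (F j)
  -- each coefficient bounded by the row sum
  have hcoeff : ∀ j n, |F j n| ≤ H j := by
    intro j n
    by_cases hn : n ∈ (F j).support
    · rw [hHval]
      exact Finset.single_le_sum (f := fun n => |F j n|) (fun i _ => abs_nonneg _) hn
    · rw [Finsupp.notMem_support_iff.mp hn, abs_zero]; exact hHnn j
  have hHs : ∀ j, H j ≤ ∑ i ∈ F.support, H i := by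
    intro j
    by_cases hj : j ∈ F.support
    · exact Finset.single_le_sum (f := fun i => H i) (fun i _ => hHnn i) hj
    · have : F j = 0 := Finsupp.notMem_support_iff.mp hj
      rw [hHval, this]
      simpa using Finset.sum_nonneg fun i _ => hHnn i
  have hinner_le : ∀ j, (⨆ n, |F j n|) ≤ H j := fun j => ciSup_le (hcoeff j)
  have hbdd : BddAbove (Set.range fun j => ⨆ n, |F j n|) := by
    refine ⟨∑ i ∈ F.support, H i, ?_⟩
    rintro x ⟨j, rfl⟩
    exact (hinner_le j).trans (hHs j)
  set supF := ⨆ j, ⨆ n, |F j n| with hsupF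
  have hinner_supF : ∀ j, (⨆ n, |F j n|) ≤ supF := fun j => le_ciSup hbdd j
  have hsupFnn : 0 ≤ supF :=
    Real.iSup_nonneg fun j => Real.iSup_nonneg fun n => abs_nonneg _
  -- Λ H ≤ D * Λ G
  have hΛH : Λ H ≤ D * Λ G := by
    have h1 : Λ H ≤ 1 * Λ (D • G) := by
      apply hΛ.uncond
      intro j
      rw [abs_of_nonneg (hHnn j), Finsupp.smul_apply, smul_eq_mul,
        abs_of_nonneg (mul_nonneg hDpos.le (hGnn j))]
      exact hth j
    rw [hΛ.smul, abs_of_pos hDpos] at h1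
    linarith
  -- G j ≤ Λ G
  have hGle : ∀ j, G j ≤ Λ G := by
    intro j
    have h1 : Λ (Finsupp.single j (G j)) = G j := by
      have h2 : Finsupp.single j (G j) = (G j) • Finsupp.single j (1:ℝ) := by
        rw [Finsupp.smul_single, smul_eq_mul, mul_one]
      rw [h2, hΛ.smul, hΛ.normalized, abs_of_nonneg (hGnn j), mul_one]
    have h3 : Λ (Finsupp.single j (G j)) ≤ 1 * Λ G := by
      apply hΛ.uncond
      intro n
      rcases eq_or_ne n j with rfl | hnj
      · rw [Finsupp.single_eq_same]
      · rw [Finsupp.single_eq_of_ne' (Ne.symm hnj), abs_zero]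
        exact abs_nonneg _
    rw [h1, one_mul] at h3
    exact h3
  have hΛGnn : 0 ≤ Λ G := hΛ.nonneg _
  -- bound the sup of H
  have hHsup : (⨆ j, |H j|) ≤ max (α (R * B) * supF) (Λ G / (R * B)) := by
    apply ciSup_le
    intro j
    rw [abs_of_nonneg (hHnn j), hHval]
    refine le_trans (hNfSA j (R * B) hR2 (F j)) (max_le_max ?_ ?_)
    · exact mul_le_mul_of_nonneg_left (hinner_supF j) (hα _ hR2).le
    · rw [← hG j]
      gcongr
      exact hGle j
  -- main estimate via Λ strong absoluteness
  have hmain : ∑ j ∈ H.support, |H j| ≤ max (B * ⨆ j, |H j|) (Λ H / (R * D)) :=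
    hΛSA (R * D) hRD H
  have hsub : H.support ⊆ F.support := Finsupp.support_mapRange
  have hsum_eq : ∑ j ∈ F.support, ∑ n ∈ (F j).support, |F j n|
      = ∑ j ∈ H.support, |H j| := by
    calc ∑ j ∈ F.support, ∑ n ∈ (F j).support, |F j n|
        = ∑ j ∈ F.support, |H j| :=
          Finset.sum_congr rfl fun j _ => by rw [abs_of_nonneg (hHnn j), hHval]
      _ = ∑ j ∈ H.support, |H j| :=
          (Finset.sum_subset hsub fun j _ hj => by
            rw [abs_eq_zero]; exact Finsupp.notMem_support_iff.mp hj).symm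
  rw [hsum_eq]
  refine hmain.trans (max_le ?_ ?_)
  · have h4 : B * (⨆ j, |H j|) ≤ B * max (α (R * B) * supF) (Λ G / (R * B)) :=
      mul_le_mul_of_nonneg_left hHsup hBpos.le
    rw [mul_max_of_nonneg _ _ hBpos.le] at h4
    have h5 : B * (Λ G / (R * B)) = Λ G / R := by
      field_simp
    rw [h5, ← mul_assoc] at h4
    exact h4.trans (max_le (le_max_left _ _) (le_max_right _ _))
  · have h6 : Λ H / (R * D) ≤ (D * Λ G) / (R * D) := by
      gcongr
    have h7 : (D * Λ G) / (R * D) = Λ G / R := by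
      field_simp
    rw [h7] at h6
    exact h6.trans (le_max_right _ _)
end

section
/- (Proposition 6.2(b) of the paper: strong absoluteness of the unit vector basis of d_{1,q}(w) for 1 < q < ∞.) Let 1 < q < ∞ and let q′ = q/(q−1) be its conjugate exponent. Let w be a weight with w_n > 0 for all n and primitive weight (s_n), and suppose ∑_{n=1}^∞ w_n^{1−q′}·s_n^{−1} < ∞. Then for every R > 0 there exists a constant C > 0 such that every admissible sequence (a_n) satisfies ∑_n a_n ≤ max( C·a_1, (1/R)·(∑_n a_n^q s_n^{q−1} w_n)^{1/q} ). -/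
/-- Proposition 6.2(b): strong absoluteness of the unit vector basis of
`d_{1,q}(w)` for `1 < q < ∞`.  Indices are shifted to start at `0`: `w n` is the
weight `w_{n+1}` of the paper and `s_{n+1} = ∑_{k ∈ range (n+1)} w k`.  If
`∑ₙ wₙ^{1-q'}·sₙ⁻¹ < ∞`, where `q' = q/(q-1)`, then for every `R > 0` there is
`C > 0` such that every admissible sequence `a` satisfies
`∑ₙ aₙ ≤ max (C·a₁) ((1/R)·(∑ₙ aₙ^q·sₙ^{q-1}·wₙ)^{1/q})`. -/
theorem stmt6 (q q' : ℝ) (hq : 1 < q) (hq' : q' = q / (q - 1))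
    (w : ℕ → ℝ) (hw : ∀ n, 0 < w n)
    (hsum : Summable fun n =>
      w n ^ (1 - q') / ∑ k ∈ Finset.range (n + 1), w k) :
    ∀ R : ℝ, 0 < R → ∃ C > 0, ∀ a : ℕ → ℝ,
      (∀ n, 0 ≤ a n) → Antitone a → (∃ N, ∀ n ≥ N, a n = 0) →
      ∑' n, a n ≤
        max (C * a 0)
          ((1 / R) *
            (∑' n, a n ^ q * (∑ k ∈ Finset.range (n + 1), w k) ^ (q - 1) * w n)
              ^ (1 / q)) := by
  intro R hR
  have hq0 : (0:ℝ) < q := lt_trans one_pos hq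
  have hq1 : q - 1 ≠ 0 := sub_ne_zero.2 (ne_of_gt hq)
  have hpq : q.HolderConjugate q' := (Real.holderConjugate_iff_eq_conjExponent hq).2 hq'
  have hq'0 : (0:ℝ) < q' := hpq.symm.pos
  set s : ℕ → ℝ := fun n => ∑ k ∈ Finset.range (n + 1), w k with hs
  have hspos : ∀ n, 0 < s n := fun n =>
    Finset.sum_pos (fun k _ => hw k) ⟨0, Finset.mem_range.2 (Nat.succ_pos n)⟩
  set g : ℕ → ℝ := fun n => w n ^ (1 - q') / s n with hgdef
  have hgnn : ∀ n, 0 ≤ g n := fun n =>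
    div_nonneg (Real.rpow_nonneg (hw n).le _) (hspos n).le
  -- choose N with small tail
  set ε : ℝ := (1 / (2 * R)) ^ q' with hε
  have hεpos : 0 < ε := Real.rpow_pos_of_pos (by positivity) _
  have hL : ∃ N, (∑' n, g n) - ε < ∑ i ∈ Finset.range N, g i := by
    have := (hsum.hasSum.tendsto_sum_nat).eventually
      (eventually_gt_nhds (show (∑' n, g n) - ε < ∑' n, g n by linarith))
    exact this.exists
  obtain ⟨N, hN⟩ := hL
  have htail : ∀ M, N ≤ M → ∑ n ∈ Finset.Ico N M, g n ≤ ε := by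
    intro M hM
    have h1 : ∑ n ∈ Finset.range M, g n ≤ ∑' n, g n :=
      Summable.sum_le_tsum _ (fun i _ => hgnn i) hsum
    have h2 : ∑ n ∈ Finset.Ico N M, g n
        = ∑ n ∈ Finset.range M, g n - ∑ n ∈ Finset.range N, g n := by
      rw [Finset.sum_Ico_eq_sub _ hM]
    linarith
  refine ⟨2 * N + 2, by positivity, ?_⟩
  intro a hann hmono ⟨N0, hN0⟩
  set M : ℕ := max N N0 with hM
  have hNM : N ≤ M := le_max_left _ _
  have haz : ∀ n, n ∉ Finset.range M → a n = 0 := by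
    intro n hn
    exact hN0 n (le_trans (le_max_right _ _) (not_lt.1 (fun h => hn (Finset.mem_range.2 h))))
  set F : ℕ → ℝ := fun n => a n ^ q * s n ^ (q - 1) * w n with hF
  have hFnn : ∀ n, 0 ≤ F n := fun n =>
    mul_nonneg (mul_nonneg (Real.rpow_nonneg (hann n) q)
      (Real.rpow_nonneg (hspos n).le _)) (hw n).le
  have hFz : ∀ n, n ∉ Finset.range M → F n = 0 := by
    intro n hn
    simp [hF, haz n hn, Real.zero_rpow (ne_of_gt hq0)]
  have hFsum : Summable F := summable_of_ne_finset_zero hFz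
  have htsa : ∑' n, a n = ∑ n ∈ Finset.range M, a n := tsum_eq_sum haz
  have htsF : ∑' n, F n = ∑ n ∈ Finset.range M, F n := tsum_eq_sum hFz
  set T : ℝ := ∑' n, F n with hT
  have hTnn : 0 ≤ T := by
    rw [htsF]; exact Finset.sum_nonneg fun i _ => hFnn i
  -- Hölder on the tail
  set P : ℕ → ℝ := fun n => s n ^ (q - 1) * w n with hP
  have hPpos : ∀ n, 0 < P n := fun n =>
    mul_pos (Real.rpow_pos_of_pos (hspos n) _) (hw n)
  set u : ℕ → ℝ := fun n => a n * P n ^ (1 / q) with hu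
  set v : ℕ → ℝ := fun n => P n ^ (-(1 / q)) with hv
  have hunn : ∀ i, 0 ≤ u i := fun i =>
    mul_nonneg (hann i) (Real.rpow_nonneg (hPpos i).le _)
  have hvnn : ∀ i, 0 ≤ v i := fun i => (Real.rpow_pos_of_pos (hPpos i) _).le
  have huv : ∀ i, u i * v i = a i := by
    intro i
    rw [hu, hv, mul_assoc, ← Real.rpow_add (hPpos i)]
    simp
  have huq : ∀ i, u i ^ q = F i := by
    intro i
    simp only [hu, hF, hP]
    rw [Real.mul_rpow (hann i) (Real.rpow_nonneg (hPpos i).le _),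
      ← Real.rpow_mul (hPpos i).le, one_div_mul_cancel (ne_of_gt hq0),
      Real.rpow_one, mul_assoc]
  have hvq : ∀ i, v i ^ q' = g i := by
    intro i
    have e1 : -(1 / q) * q' = 1 - q' := by
      rw [hq']; field_simp; ring
    have e2 : (q - 1) * (-(1 / q) * q') = -1 := by
      rw [hq']; field_simp
    simp only [hv, hgdef, hP]
    rw [← Real.rpow_mul (hPpos i).le,
      Real.mul_rpow (Real.rpow_nonneg (hspos i).le _) (hw i).le,
      ← Real.rpow_mul (hspos i).le, e2, e1, Real.rpow_neg_one]
    ring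
  have hold : ∑ i ∈ Finset.Ico N M, a i ≤ T ^ (1 / q) * (1 / (2 * R)) := by
    have h := Real.inner_le_Lp_mul_Lq_of_nonneg (Finset.Ico N M) hpq
      (fun i _ => hunn i) (fun i _ => hvnn i)
    have h1 : ∑ i ∈ Finset.Ico N M, u i * v i = ∑ i ∈ Finset.Ico N M, a i :=
      Finset.sum_congr rfl fun i _ => huv i
    have h2 : (∑ i ∈ Finset.Ico N M, u i ^ q) ^ (1 / q) ≤ T ^ (1 / q) := by
      apply Real.rpow_le_rpow (Finset.sum_nonneg fun i _ => Real.rpow_nonneg (hunn i) _)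
      · calc ∑ i ∈ Finset.Ico N M, u i ^ q = ∑ i ∈ Finset.Ico N M, F i :=
          Finset.sum_congr rfl fun i _ => huq i
        _ ≤ ∑ i ∈ Finset.range M, F i :=
          Finset.sum_le_sum_of_subset_of_nonneg
            (fun i hi => Finset.mem_range.2 (Finset.mem_Ico.1 hi).2)
            (fun i _ _ => hFnn i)
        _ = T := htsF.symm
      · positivity
    have h3 : (∑ i ∈ Finset.Ico N M, v i ^ q') ^ (1 / q') ≤ 1 / (2 * R) := by
      have hle : ∑ i ∈ Finset.Ico N M, v i ^ q' ≤ ε := by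
        calc ∑ i ∈ Finset.Ico N M, v i ^ q' = ∑ i ∈ Finset.Ico N M, g i :=
          Finset.sum_congr rfl fun i _ => hvq i
        _ ≤ ε := htail M hNM
      calc (∑ i ∈ Finset.Ico N M, v i ^ q') ^ (1 / q') ≤ ε ^ (1 / q') :=
            Real.rpow_le_rpow (Finset.sum_nonneg fun i _ =>
              Real.rpow_nonneg (hvnn i) _) hle (by positivity)
        _ = 1 / (2 * R) := by
            rw [hε, ← Real.rpow_mul (by positivity), mul_one_div,
              div_self (ne_of_gt hq'0), Real.rpow_one]
    calc ∑ i ∈ Finset.Ico N M, a i ≤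
        (∑ i ∈ Finset.Ico N M, u i ^ q) ^ (1 / q) *
          (∑ i ∈ Finset.Ico N M, v i ^ q') ^ (1 / q') := h1 ▸ h
      _ ≤ T ^ (1 / q) * (1 / (2 * R)) := by
          exact mul_le_mul h2 h3
            (Real.rpow_nonneg (Finset.sum_nonneg fun i _ =>
              Real.rpow_nonneg (hvnn i) _) _) (Real.rpow_nonneg hTnn _)
  -- head bound
  have hhead : ∑ i ∈ Finset.range N, a i ≤ (N : ℝ) * a 0 := by
    calc ∑ i ∈ Finset.range N, a i ≤ ∑ i ∈ Finset.range N, a 0 :=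
        Finset.sum_le_sum fun i _ => hmono (Nat.zero_le i)
      _ = (N : ℝ) * a 0 := by simp [mul_comm]
  -- combine
  have hsplit : ∑' n, a n = ∑ i ∈ Finset.range N, a i + ∑ i ∈ Finset.Ico N M, a i := by
    rw [htsa, ← Finset.sum_range_add_sum_Ico _ hNM]
  have ha0 : 0 ≤ a 0 := hann 0
  rcases le_total (((N : ℝ) + 1) * a 0) (T ^ (1 / q) * (1 / (2 * R))) with h | h
  · apply le_trans _ (le_max_right _ _)
    have : (1 / R) * T ^ (1 / q) = 2 * (T ^ (1 / q) * (1 / (2 * R))) := by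
      field_simp
    rw [this]
    have hNa : (N:ℝ) * a 0 ≤ ((N:ℝ)+1) * a 0 := by nlinarith
    linarith [hsplit, hhead, hold]
  · apply le_trans _ (le_max_left _ _)
    have : (2 * (N:ℝ) + 2) * a 0 = 2 * (((N:ℝ)+1) * a 0) := by ring
    rw [this]
    have hNa : (N:ℝ) * a 0 ≤ ((N:ℝ)+1) * a 0 := by nlinarith
    linarith [hsplit, hhead, hold]
end

section
/- (Proposition 6.2(c)(i) of the paper: d_{1,1}(w) ⊆ ℓ₁.) Let w be a weight with primitive weight (s_n). The following are equivalent: (i) there exists a constant C > 0 such that ∑_n a_n ≤ C·∑_n a_n·w_n for every admissible sequence (a_n); (ii) inf_n s_n/n > 0. (Condition (i) expresses the continuous inclusion of the Lorentz sequence space d_{1,1}(w) into ℓ₁.) -/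
open Finset

lemma stmt7_key (w a : ℕ → ℝ) (ha : ∀ n, 0 ≤ a n) (hant : Antitone a) (c : ℝ)
    (hc : ∀ n : ℕ, c * (n + 1) ≤ ∑ k ∈ Finset.range (n + 1), w k) :
    ∀ N : ℕ, c * ∑ k ∈ Finset.range N, a k
        + a N * ((∑ k ∈ Finset.range N, w k) - c * N) ≤ ∑ k ∈ Finset.range N, a k * w k := by
  intro N
  induction N with
  | zero => simp
  | succ N ih =>
    have h1 : a (N + 1) ≤ a N := hant (Nat.le_succ N)
    have h2 : 0 ≤ (∑ k ∈ Finset.range N, w k) + w N - c * ((N : ℝ) + 1) := by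
      have := hc N; rw [Finset.sum_range_succ] at this; push_cast at this ⊢; linarith
    have h3 := mul_le_mul_of_nonneg_right h1 h2
    rw [Finset.sum_range_succ, Finset.sum_range_succ (f := w),
      Finset.sum_range_succ (f := fun k => a k * w k)]
    push_cast
    nlinarith [ih, h3]

/-- Proposition 6.2(c)(i): inclusion `d_{1,1}(w) ⊆ ℓ₁`.
Indices are shifted to start at `0`: `w n` is the weight `w_{n+1}` of the paper and
`s_{n+1} = ∑_{k ∈ range (n+1)} w k`; thus `s_n/n` becomes
`(∑ k ∈ range (n+1), w k)/(n+1)`.  The inclusion, expressed by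
`∑ₙ aₙ ≤ C·∑ₙ aₙ·wₙ` for all admissible sequences, holds iff `infₙ sₙ/n > 0`. -/
theorem stmt7 (w : ℕ → ℝ) (hw : ∀ n, 0 ≤ w n) (hw0 : 0 < w 0) :
    (∃ C > 0, ∀ a : ℕ → ℝ, (∀ n, 0 ≤ a n) → Antitone a →
        (∃ N, ∀ n ≥ N, a n = 0) →
        ∑' n, a n ≤ C * ∑' n, a n * w n) ↔
      ∃ c > 0, ∀ n : ℕ,
        c ≤ (∑ k ∈ Finset.range (n + 1), w k) / (n + 1) := by
  constructor
  · rintro ⟨C, hC, h⟩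
    refine ⟨1 / C, by positivity, fun n => ?_⟩
    set a : ℕ → ℝ := fun k => if k < n + 1 then 1 else 0 with ha_def
    have ha0 : ∀ k, 0 ≤ a k := fun k => by by_cases hk : k ≤ n <;> simp [a, hk]
    have hant : Antitone a := by
      intro i j hij
      by_cases hj : j < n + 1
      · simp [a, (by omega : j ≤ n), (by omega : i ≤ n)]
      · by_cases hi : i ≤ n <;> simp [a, hi, if_neg (by omega : ¬ j ≤ n)]
    have hev : ∃ N, ∀ m ≥ N, a m = 0 :=
      ⟨n + 1, fun m hm => by simp [a]; omega⟩
    have key := h a ha0 hant hev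
    have hz : ∀ m ∉ Finset.range (n + 1), a m = 0 := fun m hm => by
      simp only [Finset.mem_range, not_lt] at hm; simp [a]; omega
    have t1 : ∑' m, a m = (n + 1 : ℝ) := by
      rw [tsum_eq_sum hz,
        Finset.sum_congr rfl (fun k hk => by simp [a, Nat.lt_add_one_iff.mp (Finset.mem_range.mp hk)] : ∀ k ∈ Finset.range (n+1), a k = 1)]
      simp
    have t2 : ∑' m, a m * w m = ∑ k ∈ Finset.range (n + 1), w k := by
      rw [tsum_eq_sum (s := Finset.range (n + 1)) (fun m hm => by rw [hz m hm]; ring)]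
      refine Finset.sum_congr rfl fun k hk => ?_
      simp only [Finset.mem_range] at hk
      simp [a, Nat.lt_add_one_iff.mp hk]
    rw [t1, t2] at key
    rw [div_le_div_iff₀ hC (by positivity)]
    nlinarith [key]
  · rintro ⟨c, hc, h⟩
    refine ⟨1 / c, by positivity, fun a ha0 hant ⟨N, hN⟩ => ?_⟩
    have hz : ∀ m ∉ Finset.range N, a m = 0 := fun m hm => by
      simp only [Finset.mem_range, not_lt] at hm; exact hN m hm
    rw [tsum_eq_sum hz, tsum_eq_sum (s := Finset.range N)
      (fun m hm => by rw [hz m hm]; ring)]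
    have hc' : ∀ n : ℕ, c * (n + 1) ≤ ∑ k ∈ Finset.range (n + 1), w k := by
      intro n
      have := h n
      rw [le_div_iff₀ (by positivity)] at this
      linarith
    have key := stmt7_key w a ha0 hant c hc' N
    have haN : a N = 0 := hN N le_rfl
    rw [haN] at key
    rw [one_div, inv_mul_eq_div, le_div_iff₀ hc]
    nlinarith [key]
end

section
/- (Proposition 6.2(c)(ii) of the paper: strong absoluteness of the unit vector basis of d_{1,1}(w).) Let w be a weight with primitive weight (s_n) and suppose lim_{n→∞} s_n/n = ∞. Then for every R > 0 there exists a constant C > 0 such that every admissible sequence (a_n) satisfies ∑_n a_n ≤ max( C·a_1, (1/R)·∑_n a_n·w_n ). -/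
open Finset

private lemma abel_sum (a f : ℕ → ℝ) (M : ℕ) :
    ∑ n ∈ range M, (a n - a (n + 1)) * f (n + 1) =
      (∑ n ∈ range M, a n * (f (n + 1) - f n)) + a 0 * f 0 - a M * f M := by
  induction M with
  | zero => simp
  | succ M ih => rw [sum_range_succ, sum_range_succ, ih]; ring

/-- Proposition 6.2(c)(ii): strong absoluteness of the unit vector
basis of `d_{1,1}(w)`.  Indices are shifted to start at `0`: `w n` is the weight
`w_{n+1}` of the paper and `s_{n+1} = ∑_{k ∈ range (n+1)} w k`.  If `sₙ/n → ∞`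
then for every `R > 0` there is `C > 0` such that every admissible sequence `a`
satisfies `∑ₙ aₙ ≤ max (C·a₁) ((1/R)·∑ₙ aₙ·wₙ)`. -/
theorem stmt8 (w : ℕ → ℝ) (hw : ∀ n, 0 ≤ w n) (hw0 : 0 < w 0)
    (hlim : Filter.Tendsto
      (fun n : ℕ => (∑ k ∈ Finset.range (n + 1), w k) / (n + 1))
      Filter.atTop Filter.atTop) :
    ∀ R : ℝ, 0 < R → ∃ C > 0, ∀ a : ℕ → ℝ,
      (∀ n, 0 ≤ a n) → Antitone a → (∃ N, ∀ n ≥ N, a n = 0) →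
      ∑' n, a n ≤ max (C * a 0) ((1 / R) * ∑' n, a n * w n) := by
  intro R hR
  have h2R : (0:ℝ) < 2 * R := by linarith
  obtain ⟨N, hN⟩ := Filter.eventually_atTop.mp (hlim.eventually_ge_atTop (2 * R))
  refine ⟨2 * (N + 1), by positivity, ?_⟩
  rintro a ha hmono ⟨N0, hN0⟩
  set s : ℕ → ℝ := fun n => ∑ k ∈ range n, w k with hs_def
  set M := max N0 (N + 1) with hM_def
  have hMN0 : N0 ≤ M := le_max_left _ _
  have hMN : N ≤ M := le_trans (Nat.le_succ N) (le_max_right _ _)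
  have haM : ∀ n, M ≤ n → a n = 0 := fun n hn => hN0 n (le_trans hMN0 hn)
  have hd : ∀ n, 0 ≤ a n - a (n + 1) := fun n => sub_nonneg.2 (hmono (Nat.le_succ n))
  have hs_nonneg : ∀ n, 0 ≤ s n := fun n => Finset.sum_nonneg fun k _ => hw k
  have hsum_a : ∑' n, a n = ∑ n ∈ range M, a n :=
    tsum_eq_sum (fun n hn => haM n (le_of_not_gt (fun h => hn (mem_range.2 h))))
  have hsum_aw : ∑' n, a n * w n = ∑ n ∈ range M, a n * w n :=
    tsum_eq_sum (fun n hn => by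
      rw [haM n (le_of_not_gt (fun h => hn (mem_range.2 h))), zero_mul])
  -- identity 1
  have id1 : ∑ n ∈ range M, a n = ∑ n ∈ range M, (a n - a (n + 1)) * ((n : ℝ) + 1) := by
    have := abel_sum a (fun n => (n : ℝ)) M
    simp only [Nat.cast_succ] at this
    rw [this, haM M le_rfl]
    simp
  -- identity 2
  have id2 : ∑ n ∈ range M, a n * w n = ∑ n ∈ range M, (a n - a (n + 1)) * s (n + 1) := by
    have := abel_sum a s M
    rw [this, haM M le_rfl]
    have h0 : s 0 = 0 := by simp [hs_def]
    have hdiff : ∀ n, s (n + 1) - s n = w n := fun n => by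
      simp [hs_def, Finset.sum_range_succ]
    simp [h0, hdiff]
  -- s estimate
  have hs_ge : ∀ n, N ≤ n → ((n : ℝ) + 1) ≤ s (n + 1) / (2 * R) := by
    intro n hn
    have h1 := hN n hn
    have hpos : (0:ℝ) < (n : ℝ) + 1 := by positivity
    rw [le_div_iff₀ hpos] at h1
    rw [le_div_iff₀ h2R]
    linarith
  -- split the sum
  have hsplit : ∑ n ∈ range M, (a n - a (n + 1)) * ((n : ℝ) + 1) =
      ∑ n ∈ Ico 0 N, (a n - a (n + 1)) * ((n : ℝ) + 1)
        + ∑ n ∈ Ico N M, (a n - a (n + 1)) * ((n : ℝ) + 1) := by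
    rw [Finset.sum_Ico_consecutive _ (Nat.zero_le N) hMN, range_eq_Ico]
  have hfirst : ∑ n ∈ Ico 0 N, (a n - a (n + 1)) * ((n : ℝ) + 1) ≤ ((N : ℝ) + 1) * a 0 := by
    calc ∑ n ∈ Ico 0 N, (a n - a (n + 1)) * ((n : ℝ) + 1)
        ≤ ∑ n ∈ Ico 0 N, (a n - a (n + 1)) * ((N : ℝ) + 1) := by
          apply Finset.sum_le_sum
          intro n hn
          have : (n : ℝ) + 1 ≤ (N : ℝ) + 1 := by
            have := (Finset.mem_Ico.1 hn).2
            have : (n:ℝ) ≤ N := Nat.cast_le.2 this.le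
            linarith
          exact mul_le_mul_of_nonneg_left this (hd n)
      _ = (a 0 - a N) * ((N : ℝ) + 1) := by
          rw [← Finset.sum_mul, ← range_eq_Ico, Finset.sum_range_sub' a]
      _ ≤ ((N : ℝ) + 1) * a 0 := by
          have := ha N
          nlinarith [Nat.cast_nonneg (α := ℝ) N]
  have hsecond : ∑ n ∈ Ico N M, (a n - a (n + 1)) * ((n : ℝ) + 1)
      ≤ (1 / (2 * R)) * ∑ n ∈ range M, (a n - a (n + 1)) * s (n + 1) := by
    calc ∑ n ∈ Ico N M, (a n - a (n + 1)) * ((n : ℝ) + 1)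
        ≤ ∑ n ∈ Ico N M, (a n - a (n + 1)) * (s (n + 1) / (2 * R)) := by
          apply Finset.sum_le_sum
          intro n hn
          exact mul_le_mul_of_nonneg_left (hs_ge n (Finset.mem_Ico.1 hn).1) (hd n)
      _ = (1 / (2 * R)) * ∑ n ∈ Ico N M, (a n - a (n + 1)) * s (n + 1) := by
          rw [Finset.mul_sum]; congr 1; ext n; field_simp
      _ ≤ (1 / (2 * R)) * ∑ n ∈ range M, (a n - a (n + 1)) * s (n + 1) := by
          apply mul_le_mul_of_nonneg_left _ (by positivity)
          rw [range_eq_Ico, ← Finset.sum_Ico_consecutive _ (Nat.zero_le N) hMN]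
          have : 0 ≤ ∑ n ∈ Ico 0 N, (a n - a (n + 1)) * s (n + 1) :=
            Finset.sum_nonneg fun n _ => mul_nonneg (hd n) (hs_nonneg _)
          linarith
  have key : ∑' n, a n ≤ ((N : ℝ) + 1) * a 0 + (1 / (2 * R)) * ∑' n, a n * w n := by
    rw [hsum_a, hsum_aw, id1, id2, hsplit]
    linarith [hfirst, hsecond]
  set T := ∑' n, a n * w n with hT
  by_cases hcase : (1 / (2 * R)) * T ≤ ((N : ℝ) + 1) * a 0
  · apply le_trans (le_trans key (by linarith)) (le_max_left _ _)
  · refine le_trans ?_ (le_max_right _ _)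
    push_neg at hcase
    have : (1 : ℝ) / R = 2 * (1 / (2 * R)) := by field_simp
    rw [this]
    linarith
end

section
/- Let Φ : {1,2,3,…} → (0,∞) be nondecreasing and have the upper regularity property: there is an integer r ≥ 2 with Φ(r·n) ≤ (r/2)·Φ(n) for all n ≥ 1. Then there exists a constant C > 0 (one may take C = r) such that ∑_{n=1}^m 1/Φ(n) ≤ C·m/Φ(m) for every m ≥ 1. -/
/-- if `Φ : {1,2,…} → (0,∞)` is nondecreasing and has the upper
regularity property (`Φ(r·n) ≤ (r/2)·Φ(n)` for some integer `r ≥ 2`), then there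
is `C > 0` with `∑_{n=1}^m 1/Φ(n) ≤ C·m/Φ(m)` for every `m ≥ 1`. -/
theorem stmt10 (Φ : ℕ → ℝ) (hpos : ∀ n, 1 ≤ n → 0 < Φ n)
    (hmono : ∀ m n, 1 ≤ m → m ≤ n → Φ m ≤ Φ n)
    (r : ℕ) (hr : 2 ≤ r)
    (hURP : ∀ n, 1 ≤ n → Φ (r * n) ≤ ((r : ℝ) / 2) * Φ n) :
    ∃ C > 0, ∀ m : ℕ, 1 ≤ m →
      ∑ n ∈ Finset.Icc 1 m, 1 / Φ n ≤ C * m / Φ m := by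
  have hr0 : (0:ℝ) < r := by positivity
  have hr2 : (2:ℝ) ≤ r := by exact_mod_cast hr
  refine ⟨(r:ℝ)^2, by positivity, ?_⟩
  intro m
  induction m using Nat.strong_induction_on with
  | _ m ih =>
    intro hm
    have hΦm : 0 < Φ m := hpos m hm
    have hΦ1 : 0 < Φ 1 := hpos 1 le_rfl
    by_cases hmr : m ≤ r
    · -- base case : m ≤ r
      have h1 : Φ m ≤ ((r:ℝ)/2) * Φ 1 := by
        have h := hURP 1 le_rfl
        rw [mul_one] at h
        exact le_trans (hmono m r hm hmr) h
      have hsum : ∑ n ∈ Finset.Icc 1 m, 1 / Φ n ≤ (m:ℝ) * (1 / Φ 1) := by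
        calc ∑ n ∈ Finset.Icc 1 m, 1 / Φ n ≤ ∑ _n ∈ Finset.Icc 1 m, 1 / Φ 1 := by
              apply Finset.sum_le_sum
              intro n hn
              simp only [Finset.mem_Icc] at hn
              exact one_div_le_one_div_of_le hΦ1 (hmono 1 n le_rfl hn.1)
          _ = (m:ℝ) * (1 / Φ 1) := by
              rw [Finset.sum_const, Nat.card_Icc]
              simp
      refine hsum.trans ?_
      have hm0 : (0:ℝ) ≤ m := by positivity
      rw [mul_one_div, div_le_div_iff₀ hΦ1 hΦm]
      nlinarith [mul_le_mul_of_nonneg_left h1 hm0, mul_nonneg hm0 hΦ1.le,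
        mul_nonneg (mul_nonneg hm0 hΦ1.le) hr0.le]
    · -- inductive step : m > r
      push_neg at hmr
      set q := m / r with hq
      have hq1 : 1 ≤ q := (Nat.one_le_div_iff (by omega)).mpr (by omega)
      have hrq : r * q ≤ m := Nat.mul_div_le m r
      have hmlt : m < r * (q + 1) := Nat.lt_mul_div_succ m (by omega)
      have h2q : 2 * q ≤ m := le_trans (Nat.mul_le_mul_right q hr) hrq
      have hq1m : q + 1 < m := by omega
      have hΦq : 0 < Φ (q + 1) := hpos (q + 1) (by omega)
      have hIoc : ∀ k : ℕ, Finset.Icc 1 k = Finset.Ioc 0 k := by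
        intro k; ext x; simp [Finset.mem_Icc, Finset.mem_Ioc]; omega
      -- split the sum
      have hsplit : ∑ n ∈ Finset.Icc 1 m, 1 / Φ n
          = (∑ n ∈ Finset.Icc 1 (q+1), 1 / Φ n) + ∑ n ∈ Finset.Ioc (q+1) m, 1 / Φ n := by
        rw [hIoc, hIoc]
        exact (Finset.sum_Ioc_consecutive _ (Nat.zero_le _) (le_of_lt hq1m)).symm
      have hIH : ∑ n ∈ Finset.Icc 1 (q+1), 1 / Φ n ≤ (r:ℝ)^2 * ((q:ℝ)+1) / Φ (q+1) := by
        have h := ih (q+1) hq1m (by omega)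
        push_cast at h
        exact h
      have htail : ∑ n ∈ Finset.Ioc (q+1) m, 1 / Φ n ≤ ((m:ℝ) - ((q:ℝ)+1)) * (1 / Φ (q+1)) := by
        calc ∑ n ∈ Finset.Ioc (q+1) m, 1 / Φ n ≤ ∑ _n ∈ Finset.Ioc (q+1) m, 1 / Φ (q+1) := by
              apply Finset.sum_le_sum
              intro n hn
              simp only [Finset.mem_Ioc] at hn
              exact one_div_le_one_div_of_le hΦq (hmono (q+1) n (by omega) (le_of_lt hn.1))
          _ = ((m:ℝ) - ((q:ℝ)+1)) * (1 / Φ (q+1)) := by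
              rw [Finset.sum_const, Nat.card_Ioc, nsmul_eq_mul, Nat.cast_sub (le_of_lt hq1m)]
              push_cast
              ring
      -- bound Φ m
      have hΦmb : Φ m ≤ ((r:ℝ)/2) * Φ (q+1) :=
        le_trans (hmono m (r * (q+1)) hm (le_of_lt hmlt)) (hURP (q+1) (by omega))
      have hrqR : (r:ℝ) * q ≤ m := by exact_mod_cast hrq
      have hmR : (r:ℝ) + 1 ≤ m := by exact_mod_cast (by omega : r + 1 ≤ m)
      have hq0 : (0:ℝ) ≤ q := by positivity
      have hq1mR : (q:ℝ) + 1 ≤ m := by exact_mod_cast hq1m.le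
      have hAnn : (0:ℝ) ≤ (r:ℝ)^2*((q:ℝ)+1) + ((m:ℝ) - ((q:ℝ)+1)) := by
        nlinarith [hq1mR, hq0, hr0]
      have hA : ((r:ℝ)^2*((q:ℝ)+1) + ((m:ℝ) - ((q:ℝ)+1))) * ((r:ℝ)/2) ≤ (r:ℝ)^2 * m := by
        nlinarith [mul_le_mul_of_nonneg_left hrqR (by positivity : (0:ℝ) ≤ (r:ℝ)^2),
          mul_le_mul_of_nonneg_left hmR (by nlinarith : (0:ℝ) ≤ (r:ℝ)^2 - r),
          mul_nonneg hr0.le hq0]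
      have hstep : ((r:ℝ)^2*((q:ℝ)+1) + ((m:ℝ) - ((q:ℝ)+1))) * Φ m
          ≤ (r:ℝ)^2 * m * Φ (q+1) := by
        calc ((r:ℝ)^2*((q:ℝ)+1) + ((m:ℝ) - ((q:ℝ)+1))) * Φ m
            ≤ ((r:ℝ)^2*((q:ℝ)+1) + ((m:ℝ) - ((q:ℝ)+1))) * (((r:ℝ)/2) * Φ (q+1)) :=
              mul_le_mul_of_nonneg_left hΦmb hAnn
          _ = (((r:ℝ)^2*((q:ℝ)+1) + ((m:ℝ) - ((q:ℝ)+1))) * ((r:ℝ)/2)) * Φ (q+1) := by ring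
          _ ≤ (r:ℝ)^2 * m * Φ (q+1) := mul_le_mul_of_nonneg_right hA hΦq.le
      have key : (r:ℝ)^2 * ((q:ℝ)+1) / Φ (q+1) + ((m:ℝ) - ((q:ℝ)+1)) * (1 / Φ (q+1))
          ≤ (r:ℝ)^2 * m / Φ m := by
        rw [mul_one_div, ← add_div, div_le_div_iff₀ hΦq hΦm]
        nlinarith [hstep]
      rw [hsplit]
      exact le_trans (add_le_add hIH htail) key
end

section
/- Let Φ : {1,2,3,…} → (0,∞) be nondecreasing and have the lower regularity property: there is an integer r ≥ 2 with Φ(r·n) ≥ 2·Φ(n) for all n ≥ 1. Then there exists a constant C > 0 such that ∑_{n=1}^m Φ(n)/n ≤ C·Φ(m) for every m ≥ 1. -/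
/-- if `Φ : {1,2,…} → (0,∞)` is nondecreasing and has the lower
regularity property (`Φ(r·n) ≥ 2·Φ(n)` for some integer `r ≥ 2`), then there is
`C > 0` with `∑_{n=1}^m Φ(n)/n ≤ C·Φ(m)` for every `m ≥ 1`. -/
theorem stmt11 (Φ : ℕ → ℝ) (hpos : ∀ n, 1 ≤ n → 0 < Φ n)
    (hmono : ∀ m n, 1 ≤ m → m ≤ n → Φ m ≤ Φ n)
    (r : ℕ) (hr : 2 ≤ r)
    (hLRP : ∀ n, 1 ≤ n → 2 * Φ n ≤ Φ (r * n)) :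
    ∃ C > 0, ∀ m : ℕ, 1 ≤ m →
      ∑ n ∈ Finset.Icc 1 m, Φ n / (n : ℝ) ≤ C * Φ m := by
  have hr0 : 0 < r := by omega
  have hr0' : (0:ℝ) < r := by exact_mod_cast hr0
  refine ⟨2 * r, by positivity, ?_⟩
  intro m
  induction m using Nat.strong_induction_on with
  | _ m ih =>
  intro hm
  have hΦm : 0 < Φ m := hpos m hm
  by_cases hmr : m < r
  · -- small case: each term ≤ Φ m
    calc ∑ n ∈ Finset.Icc 1 m, Φ n / (n:ℝ)
        ≤ ∑ n ∈ Finset.Icc 1 m, Φ m := by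
          apply Finset.sum_le_sum
          intro n hn
          simp only [Finset.mem_Icc] at hn
          have h1 : (1:ℝ) ≤ (n:ℝ) := by exact_mod_cast hn.1
          calc Φ n / (n:ℝ) ≤ Φ n := div_le_self (hpos n hn.1).le h1
            _ ≤ Φ m := hmono n m hn.1 hn.2
      _ = (m:ℝ) * Φ m := by
          rw [Finset.sum_const, Nat.card_Icc]
          simp [nsmul_eq_mul]
      _ ≤ (2 * r) * Φ m := by
          apply mul_le_mul_of_nonneg_right _ hΦm.le
          have : (m:ℝ) ≤ (r:ℝ) := by exact_mod_cast hmr.le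
          linarith
  · -- big case
    push_neg at hmr
    set k := m / r with hk
    have hk1 : 1 ≤ k := Nat.one_le_div_iff hr0 |>.mpr hmr
    have hkm : k < m := Nat.div_lt_self (by omega) (by omega)
    have hrk : r * k ≤ m := Nat.mul_div_le m r
    have hmlt : m < (k + 1) * r := by
      have h1 := Nat.div_add_mod m r
      have h2 := Nat.mod_lt m hr0
      calc m = r * k + m % r := h1.symm
        _ < r * k + r := by omega
        _ = (k + 1) * r := by ring
    have hsplit : ∑ n ∈ Finset.Ioc 0 k, Φ n / (n:ℝ) + ∑ n ∈ Finset.Ioc k m, Φ n / (n:ℝ)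
        = ∑ n ∈ Finset.Ioc 0 m, Φ n / (n:ℝ) :=
      Finset.sum_Ioc_consecutive _ (Nat.zero_le k) hkm.le
    have hIcc : ∀ j : ℕ, Finset.Icc 1 j = Finset.Ioc 0 j := by
      intro j; ext x; simp [Nat.lt_iff_add_one_le]
    -- bound the first sum
    have hΦk : 2 * Φ k ≤ Φ m := by
      calc 2 * Φ k ≤ Φ (r * k) := hLRP k hk1
        _ ≤ Φ m := hmono (r * k) m (by nlinarith [hr0, hk1]) hrk
    have h1 : ∑ n ∈ Finset.Ioc 0 k, Φ n / (n:ℝ) ≤ (r:ℝ) * Φ m := by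
      calc ∑ n ∈ Finset.Ioc 0 k, Φ n / (n:ℝ)
          = ∑ n ∈ Finset.Icc 1 k, Φ n / (n:ℝ) := by rw [hIcc]
        _ ≤ (2 * r) * Φ k := ih k hkm hk1
        _ = (r:ℝ) * (2 * Φ k) := by ring
        _ ≤ (r:ℝ) * Φ m := mul_le_mul_of_nonneg_left hΦk hr0'.le
    -- bound the second sum
    have hk1' : (0:ℝ) < (k:ℝ) + 1 := by positivity
    have h2 : ∑ n ∈ Finset.Ioc k m, Φ n / (n:ℝ) ≤ (r:ℝ) * Φ m := by
      calc ∑ n ∈ Finset.Ioc k m, Φ n / (n:ℝ)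
          ≤ ∑ n ∈ Finset.Ioc k m, Φ m / ((k:ℝ) + 1) := by
            apply Finset.sum_le_sum
            intro n hn
            simp only [Finset.mem_Ioc] at hn
            have hn1 : 1 ≤ n := by omega
            apply div_le_div₀ hΦm.le (hmono n m hn1 hn.2) hk1'
            exact_mod_cast hn.1
        _ = ((m - k : ℕ):ℝ) * (Φ m / ((k:ℝ) + 1)) := by
            rw [Finset.sum_const, Nat.card_Ioc]
            simp [nsmul_eq_mul]
        _ ≤ (r:ℝ) * Φ m := by
            have hcast : ((m - k : ℕ):ℝ) ≤ (r:ℝ) * ((k:ℝ) + 1) := by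
              have h3 : ((m - k : ℕ):ℝ) ≤ (m:ℝ) := by exact_mod_cast Nat.sub_le m k
              have h4 : (m:ℝ) < (((k + 1) * r : ℕ):ℝ) := by exact_mod_cast hmlt
              push_cast at h4
              nlinarith
            calc ((m - k : ℕ):ℝ) * (Φ m / ((k:ℝ) + 1))
                ≤ ((r:ℝ) * ((k:ℝ) + 1)) * (Φ m / ((k:ℝ) + 1)) := by
                  apply mul_le_mul_of_nonneg_right hcast
                  positivity
              _ = (r:ℝ) * Φ m := by field_simp
    calc ∑ n ∈ Finset.Icc 1 m, Φ n / (n:ℝ)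
        = ∑ n ∈ Finset.Ioc 0 k, Φ n / (n:ℝ) + ∑ n ∈ Finset.Ioc k m, Φ n / (n:ℝ) := by
          rw [hsplit, hIcc]
      _ ≤ (r:ℝ) * Φ m + (r:ℝ) * Φ m := add_le_add h1 h2
      _ = (2 * r) * Φ m := by ring
end

section
/- (Lemma 6.6 of the paper: q-concavity forces the lower democracy function to have the LRP.) Let 0 < q < ∞ and C ≥ 1, and let N assign to each finite subset A of ℕ a nonnegative real number such that for every finite family A₁, …, A_r of pairwise disjoint finite subsets of ℕ one has ∑_{j=1}^r N(A_j)^q ≤ C^q·N(A₁ ∪ ⋯ ∪ A_r)^q. Define φ(m) = inf{ N(A) : A ⊆ ℕ finite, |A| ≥ m }. Then for every integer r ≥ (2C)^q and every m ≥ 1, φ(r·m) ≥ 2·φ(m). (For a q-concave sequence space L, N(A) = ‖1_A‖_L and φ is its lower democracy function; the conclusion says φ has the lower regularity property.) -/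
lemma exists_disjoint_parts (m : ℕ) : ∀ (r : ℕ) (s : Finset ℕ), r * m ≤ s.card →
    ∃ f : Fin r → Finset ℕ, (∀ i, f i ⊆ s) ∧ (∀ i, (f i).card = m) ∧
      (∀ i j, i ≠ j → Disjoint (f i) (f j)) := by
  intro r
  induction r with
  | zero => exact fun s _ => ⟨Fin.elim0, fun i => i.elim0, fun i => i.elim0, fun i => i.elim0⟩
  | succ r ih =>
    intro s hs
    rw [Nat.succ_mul] at hs
    have hm : m ≤ s.card := le_trans (by omega) hs
    obtain ⟨t, hts, htc⟩ := Finset.exists_subset_card_eq hm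
    have hcard : r * m ≤ (s \ t).card := by
      rw [Finset.card_sdiff_of_subset hts, htc]
      omega
    obtain ⟨f, hfs, hfc, hfd⟩ := ih (s \ t) hcard
    refine ⟨Fin.cons t f, ?_, ?_, ?_⟩
    · intro i
      refine Fin.cases ?_ ?_ i
      · simpa using hts
      · intro j
        simpa using (hfs j).trans Finset.sdiff_subset
    · intro i
      refine Fin.cases ?_ ?_ i <;> simp [htc, hfc]
    · have key : ∀ k : Fin r, Disjoint t (f k) := fun k =>
        (Finset.sdiff_disjoint.mono_left (hfs k)).symm
      intro i j
      refine Fin.cases ?_ ?_ i <;> refine Fin.cases ?_ ?_ j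
      · exact fun h => absurd rfl h
      · exact fun k _ => by
          simp only [Fin.cons_zero, Fin.cons_succ]; exact key k
      · exact fun k _ => by
          simp only [Fin.cons_zero, Fin.cons_succ]; exact (key k).symm
      · exact fun l k h => by
          simp only [Fin.cons_succ]
          exact hfd k l fun e => h (by rw [e])

/-- Lemma 6.6: if `N` assigns nonnegative values to finite subsets of
`ℕ` and satisfies the `q`-concavity inequality
`∑ⱼ N(Aⱼ)^q ≤ C^q·N(A₁ ∪ ⋯ ∪ A_r)^q` for pairwise disjoint finite sets, then the
lower democracy function `φ(m) = inf {N A : |A| ≥ m}` satisfies `φ(r·m) ≥ 2·φ(m)`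
for every integer `r ≥ (2C)^q` and every `m ≥ 1` (the lower regularity property). -/
theorem stmt12 (q C : ℝ) (hq : 0 < q) (hC : 1 ≤ C)
    (N : Finset ℕ → ℝ) (hN0 : ∀ A, 0 ≤ N A)
    (hconc : ∀ (k : ℕ) (A : Fin k → Finset ℕ),
      (∀ i j, i ≠ j → Disjoint (A i) (A j)) →
      ∑ j, N (A j) ^ q ≤ C ^ q * N (Finset.univ.biUnion A) ^ q) :
    ∀ r : ℕ, (2 * C) ^ q ≤ (r : ℝ) → ∀ m : ℕ, 1 ≤ m →
      2 * sInf {x | ∃ A : Finset ℕ, m ≤ A.card ∧ x = N A} ≤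
        sInf {x | ∃ A : Finset ℕ, r * m ≤ A.card ∧ x = N A} := by
  intro r hr m hm
  set S1 : Set ℝ := {x | ∃ A : Finset ℕ, m ≤ A.card ∧ x = N A} with hS1
  have hne1 : S1.Nonempty := ⟨N (Finset.range m), Finset.range m, by simp, rfl⟩
  have hbd1 : BddBelow S1 := ⟨0, by rintro x ⟨A, _, rfl⟩; exact hN0 A⟩
  set φ := sInf S1 with hφ
  have hφ0 : 0 ≤ φ := le_csInf hne1 (by rintro x ⟨A, _, rfl⟩; exact hN0 A)
  refine le_csInf ⟨N (Finset.range (r * m)), Finset.range (r * m), by simp, rfl⟩ ?_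
  rintro x ⟨A, hA, rfl⟩
  obtain ⟨f, hfs, hfc, hfd⟩ := exists_disjoint_parts m r A hA
  set U : Finset ℕ := Finset.univ.biUnion f with hU
  have hUA : U ⊆ A := Finset.biUnion_subset.mpr fun i _ => hfs i
  set g : Fin (r + 1) → Finset ℕ := Fin.cons (A \ U) f with hg
  have hgd : ∀ i j, i ≠ j → Disjoint (g i) (g j) := by
    have key : ∀ k : Fin r, Disjoint (A \ U) (f k) := fun k =>
      Finset.sdiff_disjoint.mono_right (Finset.subset_biUnion_of_mem f (Finset.mem_univ k))
    intro i j
    refine Fin.cases ?_ ?_ i <;> refine Fin.cases ?_ ?_ j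
    · exact fun h => absurd rfl h
    · exact fun k _ => by
        simp only [hg, Fin.cons_zero, Fin.cons_succ]; exact key k
    · exact fun k _ => by
        simp only [hg, Fin.cons_zero, Fin.cons_succ]; exact (key k).symm
    · exact fun l k h => by
        simp only [hg, Fin.cons_succ]
        exact hfd k l fun e => h (by rw [e])
  have hgU : Finset.univ.biUnion g = A := by
    ext a
    simp only [Finset.mem_biUnion, Finset.mem_univ, true_and]
    constructor
    · rintro ⟨i, hi⟩
      refine Fin.cases ?_ ?_ i hi
      · intro h; exact (Finset.mem_sdiff.mp (by simpa [hg] using h)).1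
      · intro k h; exact hfs k (by simpa [hg] using h)
    · intro ha
      by_cases haU : a ∈ U
      · obtain ⟨k, _, hk⟩ := Finset.mem_biUnion.mp haU
        exact ⟨k.succ, by simpa [hg] using hk⟩
      · exact ⟨0, by simp [hg, Finset.mem_sdiff, ha, haU]⟩
  have hsum := hconc (r + 1) g hgd
  rw [hgU] at hsum
  have hsum' : ∑ j, N (g j) ^ q = N (A \ U) ^ q + ∑ j : Fin r, N (f j) ^ q := by
    rw [Fin.sum_univ_succ]
    simp [hg]
  have hφle : ∀ k : Fin r, φ ^ q ≤ N (f k) ^ q := by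
    intro k
    have : φ ≤ N (f k) := csInf_le hbd1 ⟨f k, by rw [hfc k], rfl⟩
    exact Real.rpow_le_rpow hφ0 this hq.le
  have hrφ : (r : ℝ) * φ ^ q ≤ ∑ j, N (g j) ^ q := by
    rw [hsum']
    have h1 : (r : ℝ) * φ ^ q ≤ ∑ j : Fin r, N (f j) ^ q := by
      calc (r : ℝ) * φ ^ q = ∑ _j : Fin r, φ ^ q := by simp [mul_comm]
        _ ≤ ∑ j : Fin r, N (f j) ^ q := Finset.sum_le_sum fun j _ => hφle j
    have h2 : 0 ≤ N (A \ U) ^ q := Real.rpow_nonneg (hN0 _) q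
    linarith
  have hCq : 0 < C ^ q := Real.rpow_pos_of_pos (by linarith) q
  have hkey : (2 * C) ^ q * φ ^ q ≤ C ^ q * N A ^ q := by
    have hφq : 0 ≤ φ ^ q := Real.rpow_nonneg hφ0 q
    calc (2 * C) ^ q * φ ^ q ≤ (r : ℝ) * φ ^ q := by nlinarith
      _ ≤ ∑ j, N (g j) ^ q := hrφ
      _ ≤ C ^ q * N A ^ q := hsum
  have h2C : (2 * C) ^ q = 2 ^ q * C ^ q := Real.mul_rpow (by norm_num) (by linarith)
  have hfin : (2 * φ) ^ q ≤ N A ^ q := by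
    rw [Real.mul_rpow (by norm_num) hφ0]
    rw [h2C] at hkey
    calc 2 ^ q * φ ^ q = (2 ^ q * C ^ q * φ ^ q) / C ^ q := by field_simp
      _ ≤ (C ^ q * N A ^ q) / C ^ q := by gcongr
      _ = N A ^ q := by field_simp
  exact (Real.rpow_le_rpow_iff (by linarith) (hN0 A) hq).mp hfin
end

section
/- (Proposition 6.7 of the paper, case q = 1.) Let N be a normalized K-unconditional coefficient quasi-norm that is 1-concave with constant C, and set s_m = inf{ N(1_A) : A ⊆ ℕ finite, |A| ≥ m } for m ≥ 1 (the lower democracy function). If lim_{m→∞} s_m/m = ∞, then N is strongly absolute: for every R > 0 there exists C′ > 0 such that every finitely supported f : ℕ → ℝ satisfies ‖f‖₁ ≤ max( C′·‖f‖_∞, N(f)/R ). -/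
/-- The lower democracy function: `s_m = inf {N(1_A) : A ⊆ ℕ finite, |A| ≥ m}`. -/
noncomputable def lowerDem (N : (ℕ →₀ ℝ) → ℝ) (m : ℕ) : ℝ :=
  sInf {x | ∃ A : Finset ℕ, m ≤ A.card ∧ x = N (∑ n ∈ A, Finsupp.single n 1)}

/-- Proposition 6.7, case `q = 1`: if `N` is `1`-concave with
constant `C` and its lower democracy function satisfies `s_m/m → ∞`, then `N` is
strongly absolute. -/
theorem stmt14 (K C : ℝ) (hK : 1 ≤ K) (hC : 1 ≤ C)
    (N : (ℕ →₀ ℝ) → ℝ) (hN : IsCoeffQuasiNorm K N)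
    (hconc : ∀ (k : ℕ) (f : Fin k → (ℕ →₀ ℝ)),
      (∀ i j, i ≠ j → Disjoint (f i).support (f j).support) →
      ∑ i, N (f i) ≤ C * N (∑ i, f i))
    (hlim : Filter.Tendsto (fun m : ℕ => lowerDem N m / m)
      Filter.atTop Filter.atTop) :
    ∀ R : ℝ, 0 < R → ∃ C' > 0, ∀ f : ℕ →₀ ℝ,
      ∑ n ∈ f.support, |f n| ≤ max (C' * ⨆ n, |f n|) (N f / R) := by
  classical
  intro R hR
  have hK0 : (0:ℝ) < K := lt_of_lt_of_le one_pos hK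
  have hC0 : (0:ℝ) < C := lt_of_lt_of_le one_pos hC
  set L : ℝ := 4*K*C*R with hLdef
  have hL0 : 0 < L := by positivity
  obtain ⟨m₀, hm₀⟩ := Filter.eventually_atTop.mp (hlim.eventually_ge_atTop L)
  set m : ℕ := max m₀ 1 with hmdef
  have hm1 : 1 ≤ m := le_max_right _ _
  have hm0R : (0:ℝ) < (m:ℝ) := by exact_mod_cast lt_of_lt_of_le one_pos hm1
  have hdem : ∀ k : ℕ, m ≤ k → L * k ≤ lowerDem N k := by
    intro k hk
    have hk0 : 0 < (k:ℝ) := by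
      exact_mod_cast lt_of_lt_of_le one_pos (le_trans hm1 hk)
    have h := hm₀ k (le_trans (le_max_left _ _) hk)
    rw [le_div_iff₀ hk0] at h
    linarith
  refine ⟨4*(m:ℝ), by positivity, ?_⟩
  intro f
  by_cases hf : f = 0
  · subst hf
    have hN0 : N 0 = 0 := (hN.eq_zero_iff 0).mpr rfl
    simp [hN0, ciSup_const]
  -- main case
  have hS : f.support.Nonempty := Finsupp.support_nonempty_iff.mpr hf
  obtain ⟨n₀, hn₀⟩ := hS
  have hS : f.support.Nonempty := ⟨n₀, hn₀⟩
  set t : ℝ := ⨆ n, |f n| with htdef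
  have hbdd : BddAbove (Set.range fun n => |f n|) := by
    refine ⟨f.support.sup' hS (fun n => |f n|), ?_⟩
    rintro x ⟨n, rfl⟩
    show |f n| ≤ f.support.sup' hS fun k => |f k|
    by_cases hn : n ∈ f.support
    · exact Finset.le_sup' (fun k => |f k|) hn
    · rw [Finsupp.notMem_support_iff.mp hn, abs_zero]
      exact le_trans (abs_nonneg (f n₀)) (Finset.le_sup' (fun k => |f k|) hn₀)
  have hub : ∀ n, |f n| ≤ t := fun n => le_ciSup hbdd n
  have ht0 : 0 < t :=
    lt_of_lt_of_le (abs_pos.mpr (Finsupp.mem_support_iff.mp hn₀)) (hub n₀)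
  set ε : ℝ := f.support.inf' hS (fun n => |f n|) with hεdef
  have hε0 : 0 < ε := by
    rw [hεdef, Finset.lt_inf'_iff]
    exact fun n hn => abs_pos.mpr (Finsupp.mem_support_iff.mp hn)
  have hεle : ∀ n ∈ f.support, ε ≤ |f n| := fun n hn => Finset.inf'_le _ hn
  have hεt : ε ≤ t := le_trans (hεle n₀ hn₀) (hub n₀)
  obtain ⟨I, hI⟩ : ∃ I : ℕ, t / ε < 2 ^ I := pow_unbounded_of_one_lt _ one_lt_two
  have hI' : t / 2 ^ I < ε := by
    rw [div_lt_iff₀ (pow_pos two_pos I)]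
    rw [div_lt_iff₀ hε0] at hI
    linarith
  have hI1 : 1 ≤ I := by
    by_contra h
    have hI0 : I = 0 := by omega
    subst hI0
    rw [div_lt_iff₀ hε0, pow_zero, one_mul] at hI
    linarith
  set p : ℕ → ℕ → Prop := fun i n => t / 2 ^ (i+1) < |f n| ∧ |f n| ≤ t / 2 ^ i with hpdef
  set g : ℕ → (ℕ →₀ ℝ) := fun i => f.filter (p i) with hgdef
  have hgsupp : ∀ i, (g i).support = f.support.filter (p i) := fun i =>
    Finsupp.support_filter _ _
  have hgapp : ∀ i n, g i n = if p i n then f n else 0 := fun i n =>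
    Finsupp.filter_apply _ _ _
  have hmono : ∀ i j : ℕ, i ≤ j → t / 2 ^ j ≤ t / 2 ^ i := by
    intro i j hij
    exact div_le_div_of_nonneg_left ht0.le (pow_pos two_pos i)
      (pow_le_pow_right₀ one_le_two hij)
  have huniq : ∀ n i j, p i n → p j n → i = j := by
    intro n i j hi hj
    by_contra hij
    rcases Nat.lt_or_ge i j with h | h
    · exact absurd hj.2 (not_le.mpr (lt_of_le_of_lt (hmono (i+1) j h) hi.1))
    · have h' : j + 1 ≤ i := lt_of_le_of_ne h (fun e => hij e.symm)
      exact absurd hi.2 (not_le.mpr (lt_of_le_of_lt (hmono (j+1) i h') hj.1))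
  have hexists : ∀ n ∈ f.support, ∃ i < I, p i n := by
    intro n hn
    have hfn : ε ≤ |f n| := hεle n hn
    have hwit : t / 2 ^ ((I - 1) + 1) < |f n| := by
      rw [Nat.sub_add_cancel hI1]
      exact lt_of_lt_of_le hI' hfn
    have hex : ∃ i, t / 2 ^ (i+1) < |f n| := ⟨I - 1, hwit⟩
    refine ⟨Nat.find hex, ?_, Nat.find_spec hex, ?_⟩
    · have h1 : Nat.find hex ≤ I - 1 := Nat.find_min' hex hwit
      omega
    · rcases Nat.eq_zero_or_pos (Nat.find hex) with h0 | hpos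
      · rw [h0]; simpa using hub n
      · have hlt : Nat.find hex - 1 < Nat.find hex := by omega
        have h2 := Nat.find_min hex hlt
        rw [not_lt] at h2
        have : Nat.find hex - 1 + 1 = Nat.find hex := by omega
        rwa [this] at h2
  have hsum : ∑ i ∈ Finset.range I, g i = f := by
    ext n
    rw [Finset.sum_apply']
    by_cases hn : n ∈ f.support
    · obtain ⟨j, hjI, hj⟩ := hexists n hn
      rw [Finset.sum_eq_single j]
      · rw [hgapp, if_pos hj]
      · intro i _ hij
        rw [hgapp, if_neg (fun hpi => hij (huniq n i j hpi hj))]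
      · intro h; exact absurd (Finset.mem_range.mpr hjI) h
    · have h0 : f n = 0 := Finsupp.notMem_support_iff.mp hn
      rw [h0]
      refine Finset.sum_eq_zero fun i _ => ?_
      rw [hgapp]
      by_cases hpi : p i n
      · rw [if_pos hpi, h0]
      · rw [if_neg hpi]
  have hdisj : ∀ i j : ℕ, i ≠ j → Disjoint (g i).support (g j).support := by
    intro i j hij
    rw [hgsupp, hgsupp, Finset.disjoint_left]
    intro n hni hnj
    exact hij (huniq n i j (Finset.mem_filter.mp hni).2 (Finset.mem_filter.mp hnj).2)
  have hconc' : ∑ i ∈ Finset.range I, N (g i) ≤ C * N f := by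
    have h := hconc I (fun i : Fin I => g i)
      (fun i j hij => hdisj i j (fun e => hij (Fin.ext e)))
    have e1 : (∑ i : Fin I, g (i:ℕ)) = f := by
      rw [Fin.sum_univ_eq_sum_range (fun i => g i) I]; exact hsum
    rw [show (∑ i : Fin I, g (i:ℕ)) = f from e1] at h
    rwa [Fin.sum_univ_eq_sum_range (fun i => N (g i)) I] at h
  -- ℓ¹ decomposition
  have hl1 : ∑ n ∈ f.support, |f n| = ∑ i ∈ Finset.range I, ∑ n ∈ (g i).support, |f n| := by
    have : ∀ i, ∑ n ∈ (g i).support, |f n|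
        = ∑ n ∈ f.support, if p i n then |f n| else 0 := by
      intro i
      rw [hgsupp, Finset.sum_filter]
    simp_rw [this]
    rw [Finset.sum_comm]
    refine (Finset.sum_congr rfl fun n hn => ?_).symm
    obtain ⟨j, hjI, hj⟩ := hexists n hn
    rw [Finset.sum_eq_single j]
    · rw [if_pos hj]
    · intro i _ hij
      rw [if_neg (fun hpi => hij (huniq n i j hpi hj))]
    · intro h; exact absurd (Finset.mem_range.mpr hjI) h
  -- per piece bound
  have hpiece : ∀ i ∈ Finset.range I, ∑ n ∈ (g i).support, |f n|
      ≤ (m:ℝ) * (t * (1/2)^i) + (2*K/L) * N (g i) := by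
    intro i _
    have h2i : (0:ℝ) < 2 ^ i := pow_pos two_pos i
    have h2i1 : (0:ℝ) < 2 ^ (i+1) := pow_pos two_pos (i+1)
    have hdiv : t * (1/2:ℝ)^i = t / 2^i := by
      rw [one_div, inv_pow, div_eq_mul_inv]
    have hNgi : 0 ≤ N (g i) := hN.nonneg _
    have hKL : 0 ≤ 2*K/L := by positivity
    have hcard : ∑ n ∈ (g i).support, |f n| ≤ ((g i).support.card : ℝ) * (t * (1/2)^i) := by
      have := Finset.sum_le_card_nsmul (g i).support (fun n => |f n|) (t * (1/2)^i)
        (fun n hn => by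
          rw [hgsupp] at hn
          rw [hdiv]
          exact (Finset.mem_filter.mp hn).2.2)
      rwa [nsmul_eq_mul] at this
    by_cases hk : m ≤ (g i).support.card
    · -- big piece
      set B := (g i).support with hBdef
      set k : ℕ := B.card with hkdef
      have hLk : L * k ≤ lowerDem N k := hdem k hk
      have hmem : N (∑ n ∈ B, Finsupp.single n 1) ∈
          {x | ∃ A : Finset ℕ, k ≤ A.card ∧ x = N (∑ n ∈ A, Finsupp.single n 1)} :=
        ⟨B, le_refl _, rfl⟩
      have hbdd' : BddBelow {x | ∃ A : Finset ℕ, k ≤ A.card ∧ x = N (∑ n ∈ A, Finsupp.single n 1)} := by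
        refine ⟨0, ?_⟩
        rintro x ⟨A, -, rfl⟩
        exact hN.nonneg _
      have hinf : lowerDem N k ≤ N (∑ n ∈ B, Finsupp.single n 1) := csInf_le hbdd' hmem
      have hindapp : ∀ a, (∑ n ∈ B, Finsupp.single n (1:ℝ)) a = if a ∈ B then 1 else 0 := by
        intro a
        rw [Finset.sum_apply']
        simp_rw [Finsupp.single_apply]
        exact Finset.sum_ite_eq' B a (fun _ => (1:ℝ))
      have hcpos : (0:ℝ) < t / 2^(i+1) := div_pos ht0 h2i1
      have key : (t/2^(i+1)) * N (∑ n ∈ B, Finsupp.single n 1) ≤ K * N (g i) := by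
        have hpt : ∀ a, |((t/2^(i+1)) • ∑ n ∈ B, Finsupp.single n (1:ℝ)) a| ≤ |g i a| := by
          intro a
          rw [Finsupp.smul_apply, hindapp a, smul_eq_mul]
          by_cases ha : a ∈ B
          · rw [if_pos ha, mul_one, abs_of_pos hcpos]
            have ha' : a ∈ f.support.filter (p i) := by rwa [hBdef, hgsupp] at ha
            have hpa : p i a := (Finset.mem_filter.mp ha').2
            rw [hgapp, if_pos hpa]
            exact hpa.1.le
          · rw [if_neg ha, mul_zero, abs_zero]
            exact abs_nonneg _
        have h := hN.uncond _ _ hpt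
        rwa [hN.smul, abs_of_pos hcpos] at h
      -- chain it together
      have h1 : (t/2^(i+1)) * (L * k) ≤ K * N (g i) :=
        le_trans (mul_le_mul_of_nonneg_left (le_trans hLk hinf) hcpos.le) key
      have h2 : (k:ℝ) * (t * (1/2)^i) = 2 * ((t/2^(i+1)) * k) := by
        rw [hdiv, pow_succ]
        field_simp
      have h3 : (k:ℝ) * (t * (1/2)^i) ≤ (2*K/L) * N (g i) := by
        rw [h2]
        calc 2 * ((t/2^(i+1)) * k) = (2/L) * ((t/2^(i+1)) * (L*k)) := by
              field_simp
          _ ≤ (2/L) * (K * N (g i)) := mul_le_mul_of_nonneg_left h1 (by positivity)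
          _ = 2*K/L * N (g i) := by ring
      calc ∑ n ∈ B, |f n| ≤ (k:ℝ) * (t * (1/2)^i) := hcard
        _ ≤ (2*K/L) * N (g i) := h3
        _ ≤ (m:ℝ) * (t * (1/2)^i) + (2*K/L) * N (g i) := by
            have : 0 ≤ (m:ℝ) * (t * (1/2)^i) := by positivity
            linarith
    · have hklem : ((g i).support.card : ℝ) ≤ (m:ℝ) :=
        Nat.cast_le.mpr (le_of_not_ge hk)
      have hpos : 0 ≤ t * (1/2:ℝ)^i := by positivity
      calc ∑ n ∈ (g i).support, |f n| ≤ ((g i).support.card : ℝ) * (t * (1/2)^i) := hcard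
        _ ≤ (m:ℝ) * (t * (1/2)^i) := mul_le_mul_of_nonneg_right hklem hpos
        _ ≤ (m:ℝ) * (t * (1/2)^i) + (2*K/L) * N (g i) := by
            have : 0 ≤ (2*K/L) * N (g i) := mul_nonneg hKL hNgi
            linarith
  -- combine
  have hgeom : ∑ i ∈ Finset.range I, ((1:ℝ)/2)^i ≤ 2 := sum_geometric_two_le I
  have hNf : 0 ≤ N f := hN.nonneg f
  have hmain : ∑ n ∈ f.support, |f n| ≤ 2*(m:ℝ)*t + N f / (2*R) := by
    calc ∑ n ∈ f.support, |f n|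
        = ∑ i ∈ Finset.range I, ∑ n ∈ (g i).support, |f n| := hl1
      _ ≤ ∑ i ∈ Finset.range I, ((m:ℝ) * (t * (1/2)^i) + (2*K/L) * N (g i)) :=
          Finset.sum_le_sum hpiece
      _ = (m:ℝ)*t * (∑ i ∈ Finset.range I, ((1:ℝ)/2)^i)
          + (2*K/L) * (∑ i ∈ Finset.range I, N (g i)) := by
          rw [Finset.sum_add_distrib, Finset.mul_sum, Finset.mul_sum]
          congr 1
          · exact Finset.sum_congr rfl fun i _ => by ring
      _ ≤ (m:ℝ)*t * 2 + (2*K/L) * (C * N f) := by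
          refine add_le_add (mul_le_mul_of_nonneg_left hgeom (by positivity)) ?_
          exact mul_le_mul_of_nonneg_left hconc' (by positivity)
      _ = 2*(m:ℝ)*t + N f / (2*R) := by
          rw [hLdef]
          field_simp
          ring
  have hmax1 : 4*(m:ℝ)*t ≤ max (4*(m:ℝ) * t) (N f / R) := le_max_left _ _
  have hmax2 : N f / R ≤ max (4*(m:ℝ) * t) (N f / R) := le_max_right _ _
  have hhalf : N f / (2*R) = (N f / R) / 2 := by ring
  calc ∑ n ∈ f.support, |f n| ≤ 2*(m:ℝ)*t + N f / (2*R) := hmain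
    _ = (4*(m:ℝ)*t)/2 + (N f / R)/2 := by rw [hhalf]; ring
    _ ≤ max (4*(m:ℝ) * t) (N f / R) := by linarith [hmax1, hmax2]
end

section
/- (Proposition 6.7 of the paper, case 1 < q < ∞.) Let 1 < q < ∞ with conjugate exponent q′ = q/(q−1). Let N be a normalized K-unconditional coefficient quasi-norm that is q-concave with constant C, and set s_m = inf{ N(1_A) : A ⊆ ℕ finite, |A| ≥ m } for m ≥ 1 (the lower democracy function). If ∑_{m=1}^∞ m^{q′−1}/s_m^{q′} < ∞, then N is strongly absolute: for every R > 0 there exists C′ > 0 such that every finitely supported f : ℕ → ℝ satisfies ‖f‖₁ ≤ max( C′·‖f‖_∞, N(f)/R ). -/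
/-! ### Auxiliary lemmas -/

/-- The indicator of a finite set, as a finsupp. -/
noncomputable def indicF (A : Finset ℕ) : ℕ →₀ ℝ := ∑ n ∈ A, Finsupp.single n 1

lemma indicF_apply (A : Finset ℕ) (n : ℕ) : indicF A n = if n ∈ A then 1 else 0 := by
  classical
  rw [indicF, Finsupp.finset_sum_apply]
  simp [Finsupp.single_apply]

lemma lowerDem_eq (N : (ℕ →₀ ℝ) → ℝ) (m : ℕ) :
    lowerDem N m = sInf {x | ∃ A : Finset ℕ, m ≤ A.card ∧ x = N (indicF A)} := rfl

section Aux

variable {K q C : ℝ} {N : (ℕ →₀ ℝ) → ℝ}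

lemma lowerDem_bddBelow (hN : IsCoeffQuasiNorm K N) (m : ℕ) :
    BddBelow {x | ∃ A : Finset ℕ, m ≤ A.card ∧ x = N (indicF A)} := by
  refine ⟨0, ?_⟩
  rintro x ⟨A, -, rfl⟩
  exact hN.nonneg _

lemma lowerDem_set_nonempty (m : ℕ) :
    Set.Nonempty {x | ∃ A : Finset ℕ, m ≤ A.card ∧ x = N (indicF A)} :=
  ⟨N (indicF (Finset.range m)), Finset.range m, by simp, rfl⟩

lemma lowerDem_nonneg (hN : IsCoeffQuasiNorm K N) (m : ℕ) : 0 ≤ lowerDem N m := by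
  rw [lowerDem_eq]
  exact Real.sInf_nonneg (by rintro x ⟨A, -, rfl⟩; exact hN.nonneg _)

lemma lowerDem_le (hN : IsCoeffQuasiNorm K N) {m : ℕ} {A : Finset ℕ} (h : m ≤ A.card) :
    lowerDem N m ≤ N (indicF A) := by
  rw [lowerDem_eq]
  exact csInf_le (lowerDem_bddBelow hN m) ⟨A, h, rfl⟩

lemma lowerDem_mono (hN : IsCoeffQuasiNorm K N) {m m' : ℕ} (h : m ≤ m') :
    lowerDem N m ≤ lowerDem N m' := by
  rw [lowerDem_eq, lowerDem_eq]
  refine csInf_le_csInf (lowerDem_bddBelow hN m) (lowerDem_set_nonempty (N := N) m') ?_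
  rintro x ⟨A, hA, rfl⟩
  exact ⟨A, le_trans h hA, rfl⟩

lemma one_div_K_le_lowerDem (hN : IsCoeffQuasiNorm K N) (hK : 1 ≤ K) {m : ℕ} (hm : 1 ≤ m) :
    1 / K ≤ lowerDem N m := by
  have hK0 : (0:ℝ) < K := lt_of_lt_of_le one_pos hK
  rw [lowerDem_eq]
  refine le_csInf (lowerDem_set_nonempty (N := N) m) ?_
  rintro x ⟨A, hA, rfl⟩
  have hA0 : 0 < A.card := lt_of_lt_of_le hm hA
  obtain ⟨n, hn⟩ := Finset.card_pos.1 hA0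
  have h1 : N (Finsupp.single n 1) ≤ K * N (indicF A) := by
    refine hN.uncond _ _ ?_
    intro n'
    rw [indicF_apply, Finsupp.single_apply]
    by_cases h : n = n'
    · subst h; simp [hn]
    · simp [h]
  rw [hN.normalized n] at h1
  rw [div_le_iff₀ hK0, mul_comm]
  exact h1

lemma lowerDem_pos (hN : IsCoeffQuasiNorm K N) (hK : 1 ≤ K) {m : ℕ} (hm : 1 ≤ m) :
    0 < lowerDem N m :=
  lt_of_lt_of_le (by positivity) (one_div_K_le_lowerDem hN hK hm)

/-- The key `q`-concavity package: disjoint sets `B j`, with `|f|` at least `t j ≥ 0` on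
`B j`, give an `ℓ_q` bound. -/
lemma concavity_package (hN : IsCoeffQuasiNorm K N) (hq : 0 < q) (hC : 0 ≤ C)
    (hconc : ∀ (k : ℕ) (f : Fin k → (ℕ →₀ ℝ)),
      (∀ i j, i ≠ j → Disjoint (f i).support (f j).support) →
      (∑ i, N (f i) ^ q) ^ (1 / q) ≤ C * N (∑ i, f i))
    (f : ℕ →₀ ℝ) (r : ℕ) (B : Fin r → Finset ℕ) (t : Fin r → ℝ)
    (ht0 : ∀ j, 0 ≤ t j)
    (hdisj : ∀ i j, i ≠ j → Disjoint (B i) (B j))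
    (hle : ∀ j, ∀ n ∈ B j, t j ≤ |f n|) :
    ∑ j, (t j * N (indicF (B j))) ^ q ≤ (C * (K * N f)) ^ q := by
  classical
  set g : Fin r → (ℕ →₀ ℝ) := fun j => t j • indicF (B j) with hg
  have hg_apply : ∀ j n, g j n = if n ∈ B j then t j else 0 := by
    intro j n
    rw [hg]
    simp only [Finsupp.smul_apply, indicF_apply, smul_eq_mul, mul_ite, mul_one, mul_zero]
  have hsupp : ∀ j, (g j).support ⊆ B j := by
    intro j n hn
    rw [Finsupp.mem_support_iff] at hn
    by_contra h
    exact hn (by rw [hg_apply, if_neg h])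
  have hd : ∀ i j, i ≠ j → Disjoint (g i).support (g j).support := fun i j hij =>
    (hdisj i j hij).mono (hsupp i) (hsupp j)
  have hNg : ∀ j, N (g j) = t j * N (indicF (B j)) := by
    intro j
    simp only [hg]
    rw [hN.smul, abs_of_nonneg (ht0 j)]
  have hptwise : ∀ n, |(∑ j, g j) n| ≤ |f n| := by
    intro n
    rw [Finsupp.finset_sum_apply]
    by_cases hex : ∃ j, n ∈ B j
    · obtain ⟨j₀, hj₀⟩ := hex
      rw [Finset.sum_eq_single j₀]
      · rw [hg_apply, if_pos hj₀, abs_of_nonneg (ht0 j₀)]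
        exact hle j₀ n hj₀
      · intro b _ hb
        rw [hg_apply, if_neg]
        intro hnb
        exact (Finset.disjoint_left.1 (hdisj b j₀ hb) hnb) hj₀
      · intro h; exact absurd (Finset.mem_univ j₀) h
    · rw [Finset.sum_eq_zero]
      · simp
      · intro j _
        rw [hg_apply, if_neg (fun h => hex ⟨j, h⟩)]
  have key := hconc r g hd
  have hNf : N (∑ j, g j) ≤ K * N f := hN.uncond _ _ hptwise
  have hXrw : ∑ j, (t j * N (indicF (B j))) ^ q = ∑ j, N (g j) ^ q := by
    refine Finset.sum_congr rfl fun j _ => ?_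
    rw [hNg j]
  rw [hXrw]
  set X : ℝ := ∑ j, N (g j) ^ q with hX
  have hX0 : 0 ≤ X :=
    Finset.sum_nonneg fun j _ => Real.rpow_nonneg (hN.nonneg _) _
  calc X = X ^ ((1 / q) * q) := by
        rw [one_div_mul_cancel (ne_of_gt hq), Real.rpow_one]
    _ = (X ^ (1 / q)) ^ q := Real.rpow_mul hX0 _ _
    _ ≤ (C * N (∑ j, g j)) ^ q :=
        Real.rpow_le_rpow (Real.rpow_nonneg hX0 _) key (le_of_lt hq)
    _ ≤ (C * (K * N f)) ^ q :=
        Real.rpow_le_rpow (mul_nonneg hC (hN.nonneg _))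
          (mul_le_mul_of_nonneg_left hNf hC) (le_of_lt hq)

/-- Every finite set of naturals can be listed in decreasing order of `g`. -/
lemma exists_sorted_list (g : ℕ → ℝ) (S : Finset ℕ) :
    ∃ l : List ℕ, l.Nodup ∧ (∀ n, n ∈ l ↔ n ∈ S) ∧
      List.Pairwise (fun a b => g b ≤ g a) l := by
  classical
  induction S using Finset.strongInduction with
  | _ S ih =>
    rcases S.eq_empty_or_nonempty with rfl | hS
    · exact ⟨[], by simp, by simp, by simp⟩
    · obtain ⟨n, hn, hmax⟩ := Finset.exists_max_image S g hS
      obtain ⟨l, hnd, hmem, hsort⟩ := ih (S.erase n) (Finset.erase_ssubset hn)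
      refine ⟨n :: l, ?_, ?_, ?_⟩
      · refine List.nodup_cons.2 ⟨fun h => ?_, hnd⟩
        have := (hmem n).1 h
        simp at this
      · intro m
        simp only [List.mem_cons, hmem, Finset.mem_erase]
        constructor
        · rintro (rfl | ⟨-, h⟩)
          · exact hn
          · exact h
        · intro h
          by_cases hmn : m = n
          · exact Or.inl hmn
          · exact Or.inr ⟨hmn, h⟩
      · rw [List.pairwise_cons]
        refine ⟨fun b hb => ?_, hsort⟩
        exact hmax b (Finset.mem_of_mem_erase ((hmem b).1 hb))

/-- Dyadic decomposition of a sum over an interval. -/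
lemma dyadic_sum (b : ℕ → ℝ) {J T : ℕ} (h : J ≤ T) :
    ∑ j ∈ Finset.Ico J T, ∑ i ∈ Finset.Ico (2 ^ j) (2 ^ (j + 1)), b i
      = ∑ i ∈ Finset.Ico (2 ^ J) (2 ^ T), b i := by
  induction T, h using Nat.le_induction with
  | base => simp
  | succ T hJT ih =>
      rw [Finset.sum_Ico_succ_top hJT, ih,
        Finset.sum_Ico_consecutive _ (Nat.pow_le_pow_right (by norm_num) hJT)
          (Nat.pow_le_pow_right (by norm_num) (Nat.le_succ T))]

end Aux

/-- Proposition 6.7, case `1 < q < ∞`: if `N` is `q`-concave with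
constant `C` and its lower democracy function satisfies
`∑_{m=1}^∞ m^{q'-1}/s_m^{q'} < ∞` with `q' = q/(q-1)`, then `N` is strongly
absolute. -/
theorem stmt15 (K q q' C : ℝ) (hK : 1 ≤ K) (hq : 1 < q) (hq' : q' = q / (q - 1))
    (hC : 1 ≤ C)
    (N : (ℕ →₀ ℝ) → ℝ) (hN : IsCoeffQuasiNorm K N)
    (hconc : ∀ (k : ℕ) (f : Fin k → (ℕ →₀ ℝ)),
      (∀ i j, i ≠ j → Disjoint (f i).support (f j).support) →
      (∑ i, N (f i) ^ q) ^ (1 / q) ≤ C * N (∑ i, f i))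
    (hsum : Summable fun m : ℕ =>
      ((m + 1 : ℕ) : ℝ) ^ (q' - 1) / lowerDem N (m + 1) ^ q') :
    ∀ R : ℝ, 0 < R → ∃ C' > 0, ∀ f : ℕ →₀ ℝ,
      ∑ n ∈ f.support, |f n| ≤ max (C' * ⨆ n, |f n|) (N f / R) := by
  classical
  intro R hR
  have hq0 : (0:ℝ) < q := lt_trans zero_lt_one hq
  have hcj : q.HolderConjugate q' := (Real.holderConjugate_iff_eq_conjExponent hq).2 hq'
  have hq'1 : 1 < q' := hcj.symm.lt
  have hq'0 : (0:ℝ) < q' := lt_trans zero_lt_one hq'1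
  have hK0 : (0:ℝ) < K := lt_of_lt_of_le zero_lt_one hK
  have hC0 : (0:ℝ) < C := lt_of_lt_of_le zero_lt_one hC
  set H : ℕ → ℝ := fun m => ((m + 1 : ℕ) : ℝ) ^ (q' - 1) / lowerDem N (m + 1) ^ q' with hHdef
  have hsumH : Summable H := hsum
  have hH0 : ∀ m, 0 ≤ H m := by
    intro m
    apply div_nonneg
    · apply Real.rpow_nonneg; positivity
    · exact Real.rpow_nonneg (lowerDem_nonneg hN _) _
  set δ : ℝ := (8 * C * K * R)⁻¹ ^ q' with hδdef
  have hδ0 : 0 < δ := Real.rpow_pos_of_pos (by positivity) _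
  obtain ⟨J, hJ2, hJtail⟩ : ∃ J : ℕ, 2 ≤ J ∧ (∑' m, H (m + 2 ^ (J - 2))) < δ := by
    have h1 : Filter.Tendsto (fun o : ℕ => ∑' m, H (m + o)) Filter.atTop (nhds 0) :=
      tendsto_sum_nat_add H
    have h2 : Filter.Tendsto (fun Jx : ℕ => 2 ^ (Jx - 2)) Filter.atTop Filter.atTop :=
      (tendsto_pow_atTop_atTop_of_one_lt (by norm_num)).comp (Filter.tendsto_sub_atTop_nat 2)
    have h3 := (h1.comp h2).eventually_lt_const hδ0
    exact ((Filter.eventually_ge_atTop 2).and h3).exists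
  refine ⟨2 * 2 ^ J, by positivity, fun f => ?_⟩
  -- the sup of coefficients
  have hbdd : BddAbove (Set.range fun n => |f n|) := by
    apply BddAbove.mono _
      ((insert (0:ℝ) ((f.support.image fun n => |f n|) : Finset ℝ) : Finset ℝ).finite_toSet.bddAbove)
    rintro x ⟨n, rfl⟩
    by_cases h : n ∈ f.support
    · exact Finset.mem_coe.2 (Finset.mem_insert_of_mem (Finset.mem_image_of_mem _ h))
    · have h0 : f n = 0 := Finsupp.notMem_support_iff.1 h
      simp [h0]
  set Sup : ℝ := ⨆ n, |f n| with hSupDef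
  have hSup_ge : ∀ n, |f n| ≤ Sup := fun n => le_ciSup hbdd n
  have hSup0 : 0 ≤ Sup := le_trans (abs_nonneg (f 0)) (hSup_ge 0)
  -- the sorted enumeration of the support
  set k := f.support.card with hk
  obtain ⟨l, hnd, hmem, hsort⟩ := exists_sorted_list (fun n => |f n|) f.support
  have hlen : l.length = k := by
    rw [hk, ← List.toFinset_card_of_nodup hnd]
    congr 1
    ext n
    simp [hmem n]
  set a : ℕ → ℝ := fun i => if h : i < l.length then |f (l.get ⟨i, h⟩)| else 0 with haDef
  have ha0 : ∀ i, 0 ≤ a i := by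
    intro i; simp only [haDef]; split
    · exact abs_nonneg _
    · exact le_rfl
  have haSup : ∀ i, a i ≤ Sup := by
    intro i; simp only [haDef]; split
    · exact hSup_ge _
    · exact hSup0
  have ha_zero : ∀ i, l.length ≤ i → a i = 0 := by
    intro i hi; simp only [haDef]; rw [dif_neg (by omega)]
  have ha_mono : ∀ {i j : ℕ}, i ≤ j → a j ≤ a i := by
    intro i j hij
    by_cases hj : j < l.length
    · have hi : i < l.length := lt_of_le_of_lt hij hj
      rcases lt_or_eq_of_le hij with hlt | rfl
      · have hrel := hsort.rel_get_of_lt (a := ⟨i, hi⟩) (b := ⟨j, hj⟩) (by simpa using hlt)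
        simp only [haDef]
        rw [dif_pos hj, dif_pos hi]
        exact hrel
      · exact le_rfl
    · rw [ha_zero j (by omega)]; exact ha0 i
  -- the total sum as a sum of `a`
  have hsum_eq : ∑ n ∈ f.support, |f n| = ∑ i ∈ Finset.range k, a i := by
    rw [← hlen]
    refine (Finset.sum_bij
      (i := fun (i : ℕ) (hi : i ∈ Finset.range l.length) => l.get ⟨i, Finset.mem_range.1 hi⟩)
      ?_ ?_ ?_ ?_).symm
    · intro i hi
      exact (hmem _).1 (l.get_mem _)
    · intro i1 h1 i2 h2 heq
      have := (List.Nodup.get_inj_iff hnd).1 heq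
      simpa using this
    · intro n hn
      obtain ⟨i, hi⟩ := List.mem_iff_get.1 ((hmem n).2 hn)
      exact ⟨i.1, Finset.mem_range.2 i.2, by simpa using hi⟩
    · intro i hi
      simp only [haDef]
      rw [dif_pos (Finset.mem_range.1 hi)]
  set T := J + k with hT
  have hJT : J ≤ T := Nat.le_add_right J k
  have hkT : k ≤ 2 ^ T := le_trans (Nat.lt_two_pow_self (n := k)).le
    (Nat.pow_le_pow_right (by norm_num) (Nat.le_add_left k J))
  -- the pivots
  set mj : ℕ → ℝ := fun j => a (2 ^ j - 1) with hmjDef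
  have hmj0 : ∀ j, 0 ≤ mj j := fun j => ha0 _
  -- blockwise bound
  have hblock : ∀ j, ∑ i ∈ Finset.Ico (2 ^ j) (2 ^ (j + 1)), a i ≤ (2 ^ j : ℝ) * mj j := by
    intro j
    have hb : ∀ i ∈ Finset.Ico (2 ^ j) (2 ^ (j + 1)), a i ≤ mj j := by
      intro i hi
      have h1 : 2 ^ j - 1 ≤ i := le_trans (Nat.sub_le _ _) (Finset.mem_Ico.1 hi).1
      exact ha_mono h1
    calc ∑ i ∈ Finset.Ico (2 ^ j) (2 ^ (j + 1)), a i
        ≤ (Finset.Ico (2 ^ j) (2 ^ (j + 1))).card • mj j := Finset.sum_le_card_nsmul _ _ _ hb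
      _ = (2 ^ j : ℝ) * mj j := by
          rw [Nat.card_Ico, nsmul_eq_mul]
          congr 1
          have h2 : (2:ℕ) ^ (j + 1) = 2 * 2 ^ j := by rw [pow_succ]; ring
          have h3 : (2:ℕ) ^ (j + 1) - 2 ^ j = 2 ^ j := by omega
          rw [h3]
          push_cast
          ring
  -- the concavity bound for the pivots
  have hPle : ∑ j ∈ Finset.Ico J T, (mj j * lowerDem N (2 ^ (j - 1))) ^ q
      ≤ (C * (K * N f)) ^ q := by
    rw [Finset.sum_Ico_eq_sum_range, ← Fin.sum_univ_eq_sum_range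
      (fun x => (mj (J + x) * lowerDem N (2 ^ (J + x - 1))) ^ q) (T - J)]
    set B : Fin (T - J) → Finset ℕ := fun i =>
      if 2 ^ (J + i.1) ≤ k then
        (Finset.Ico (2 ^ (J + i.1 - 1)) (2 ^ (J + i.1))).image
          (fun x => if h : x < l.length then l.get ⟨x, h⟩ else 0)
      else ∅ with hBdef
    have hmem_B : ∀ (i : Fin (T - J)) n, n ∈ B i →
        2 ^ (J + i.1) ≤ k ∧ ∃ x, x ∈ Finset.Ico (2 ^ (J + i.1 - 1)) (2 ^ (J + i.1)) ∧
          ∃ (hxl : x < l.length), l.get ⟨x, hxl⟩ = n := by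
      intro i n hn
      rw [hBdef] at hn
      dsimp only at hn
      by_cases hvalid : 2 ^ (J + i.1) ≤ k
      · rw [if_pos hvalid] at hn
        obtain ⟨x, hx, hxe⟩ := Finset.mem_image.1 hn
        have hxk : x < l.length := by
          rw [hlen]
          have := (Finset.mem_Ico.1 hx).2
          omega
        refine ⟨hvalid, x, hx, hxk, ?_⟩
        rw [dif_pos hxk] at hxe
        exact hxe
      · rw [if_neg hvalid] at hn
        exact absurd hn (Finset.notMem_empty n)
    have hdisj : ∀ i i' : Fin (T - J), i ≠ i' → Disjoint (B i) (B i') := by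
      intro i i' hne
      rw [Finset.disjoint_left]
      intro n hn hn'
      obtain ⟨hv, x, hx, hxl, hxe⟩ := hmem_B i n hn
      obtain ⟨hv', x', hx', hxl', hxe'⟩ := hmem_B i' n hn'
      have hxx : x = x' := by
        have : l.get ⟨x, hxl⟩ = l.get ⟨x', hxl'⟩ := by rw [hxe, hxe']
        have h2 := (List.Nodup.get_inj_iff hnd).1 this
        simpa using h2
      subst hxx
      have hne2 : J + i.1 ≠ J + i'.1 := by
        intro h
        exact hne (Fin.ext (by omega))
      rcases Nat.lt_or_ge (J + i.1) (J + i'.1) with hlt | hge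
      · have : (2:ℕ) ^ (J + i.1) ≤ 2 ^ (J + i'.1 - 1) :=
          Nat.pow_le_pow_right (by norm_num) (by omega)
        have h1 := (Finset.mem_Ico.1 hx).2
        have h2 := (Finset.mem_Ico.1 hx').1
        omega
      · have hlt : J + i'.1 < J + i.1 := by omega
        have : (2:ℕ) ^ (J + i'.1) ≤ 2 ^ (J + i.1 - 1) :=
          Nat.pow_le_pow_right (by norm_num) (by omega)
        have h1 := (Finset.mem_Ico.1 hx').2
        have h2 := (Finset.mem_Ico.1 hx).1
        omega
    have hle : ∀ (i : Fin (T - J)), ∀ n ∈ B i, mj (J + i.1) ≤ |f n| := by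
      intro i n hn
      obtain ⟨hv, x, hx, hxl, hxe⟩ := hmem_B i n hn
      have hfa : |f n| = a x := by
        simp only [haDef]
        rw [dif_pos hxl, hxe]
      rw [hfa, hmjDef]
      refine ha_mono ?_
      have := (Finset.mem_Ico.1 hx).2
      omega
    have hpack := concavity_package hN hq0 (le_of_lt hC0) hconc f (T - J) B
      (fun i => mj (J + i.1)) (fun i => hmj0 _) hdisj hle
    refine le_trans (Finset.sum_le_sum ?_) hpack
    intro i _
    by_cases hvalid : 2 ^ (J + i.1) ≤ k
    · have hcard : (B i).card = 2 ^ (J + i.1 - 1) := by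
        rw [hBdef]; dsimp only
        rw [if_pos hvalid]
        rw [Finset.card_image_of_injOn, Nat.card_Ico]
        · have h1 : (2:ℕ) ^ (J + i.1) = 2 * 2 ^ (J + i.1 - 1) := by
            conv_lhs => rw [show J + i.1 = (J + i.1 - 1) + 1 from by omega]
            rw [pow_succ]
            ring
          omega
        · intro x hx y hy hxy
          have hxl : x < l.length := by
            rw [hlen]; have := (Finset.mem_Ico.1 hx).2; omega
          have hyl : y < l.length := by
            rw [hlen]; have := (Finset.mem_Ico.1 hy).2; omega
          simp only [dif_pos hxl, dif_pos hyl] at hxy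
          have := (List.Nodup.get_inj_iff hnd).1 hxy
          simpa using this
      have hsle : lowerDem N (2 ^ (J + i.1 - 1)) ≤ N (indicF (B i)) :=
        lowerDem_le hN (le_of_eq hcard.symm)
      refine Real.rpow_le_rpow (mul_nonneg (hmj0 _) (lowerDem_nonneg hN _)) ?_ (le_of_lt hq0)
      exact mul_le_mul_of_nonneg_left hsle (hmj0 _)
    · have hmjz : mj (J + i.1) = 0 := by
        rw [hmjDef]
        refine ha_zero _ ?_
        rw [hlen]
        omega
      simp only [hmjz, zero_mul]
      exact le_rfl
  -- positivity of the democracy values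
  have hs_pos : ∀ j : ℕ, 0 < lowerDem N (2 ^ j) :=
    fun j => lowerDem_pos hN hK Nat.one_le_two_pow
  -- Hoelder
  have hG0 : ∀ j, (0:ℝ) ≤ ((2 ^ j : ℝ) / lowerDem N (2 ^ (j - 1))) ^ q' :=
    fun j => Real.rpow_nonneg (div_nonneg (by positivity) (lowerDem_nonneg hN _)) _
  have hhold : ∑ j ∈ Finset.Ico J T, (2 ^ j : ℝ) * mj j ≤
      (∑ j ∈ Finset.Ico J T, (mj j * lowerDem N (2 ^ (j - 1))) ^ q) ^ (1 / q) *
      (∑ j ∈ Finset.Ico J T, ((2 ^ j : ℝ) / lowerDem N (2 ^ (j - 1))) ^ q') ^ (1 / q') := by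
    have h := Real.inner_le_Lp_mul_Lq_of_nonneg (Finset.Ico J T)
      (f := fun j => mj j * lowerDem N (2 ^ (j - 1)))
      (g := fun j => (2 ^ j : ℝ) / lowerDem N (2 ^ (j - 1))) hcj
      (fun j _ => mul_nonneg (hmj0 j) (lowerDem_nonneg hN _))
      (fun j _ => div_nonneg (by positivity) (lowerDem_nonneg hN _))
    refine le_trans (le_of_eq (Finset.sum_congr rfl fun j _ => ?_)) h
    have hsne : lowerDem N (2 ^ (j - 1)) ≠ 0 := ne_of_gt (hs_pos (j - 1))
    field_simp
  -- first Hoelder factor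
  have hfac1 : (∑ j ∈ Finset.Ico J T, (mj j * lowerDem N (2 ^ (j - 1))) ^ q) ^ (1 / q)
      ≤ C * (K * N f) := by
    have hX0 : 0 ≤ ∑ j ∈ Finset.Ico J T, (mj j * lowerDem N (2 ^ (j - 1))) ^ q :=
      Finset.sum_nonneg fun j _ =>
        Real.rpow_nonneg (mul_nonneg (hmj0 j) (lowerDem_nonneg hN _)) _
    have hY0 : (0:ℝ) ≤ C * (K * N f) := by
      have := hN.nonneg f; positivity
    calc (∑ j ∈ Finset.Ico J T, (mj j * lowerDem N (2 ^ (j - 1))) ^ q) ^ (1 / q)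
        ≤ ((C * (K * N f)) ^ q) ^ (1 / q) :=
          Real.rpow_le_rpow hX0 hPle (by positivity)
      _ = C * (K * N f) := by
          rw [← Real.rpow_mul hY0, mul_one_div_cancel (ne_of_gt hq0), Real.rpow_one]
  -- second Hoelder factor: comparison with the series
  have hterm : ∀ j ∈ Finset.Ico J T, ((2 ^ j : ℝ) / lowerDem N (2 ^ (j - 1))) ^ q'
      ≤ (4:ℝ) ^ q' * ∑ m ∈ Finset.Ico (2 ^ (j - 2)) (2 ^ (j - 1)), H m := by
    intro j hj
    have hj2 : 2 ≤ j := le_trans hJ2 (Finset.mem_Ico.1 hj).1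
    have hx0 : (0:ℝ) < (2:ℝ) ^ (j - 2) := by positivity
    have hHm : ∀ m ∈ Finset.Ico (2 ^ (j - 2)) (2 ^ (j - 1)),
        ((2:ℝ) ^ (j - 2)) ^ (q' - 1) / lowerDem N (2 ^ (j - 1)) ^ q' ≤ H m := by
      intro m hm
      obtain ⟨hm1, hm2⟩ := Finset.mem_Ico.1 hm
      rw [hHdef]
      dsimp only
      apply div_le_div₀
      · apply Real.rpow_nonneg; positivity
      · apply Real.rpow_le_rpow (le_of_lt hx0) ?_ (by linarith)
        push_cast
        have : (2:ℝ) ^ (j - 2) ≤ (m : ℝ) := by exact_mod_cast hm1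
        linarith
      · exact Real.rpow_pos_of_pos (lowerDem_pos hN hK (by omega)) _
      · exact Real.rpow_le_rpow (lowerDem_nonneg hN _)
          (lowerDem_mono hN (by omega)) (le_of_lt hq'0)
    have hblocksum : ((2:ℝ) ^ (j - 2)) ^ q' / lowerDem N (2 ^ (j - 1)) ^ q'
        ≤ ∑ m ∈ Finset.Ico (2 ^ (j - 2)) (2 ^ (j - 1)), H m := by
      have hcard := Finset.card_nsmul_le_sum _ _ _ hHm
      rw [Nat.card_Ico] at hcard
      have hc : (2:ℕ) ^ (j - 1) - 2 ^ (j - 2) = 2 ^ (j - 2) := by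
        have h1 : j - 1 = (j - 2) + 1 := by omega
        rw [h1, pow_succ]
        omega
      rw [hc, nsmul_eq_mul] at hcard
      refine le_trans (le_of_eq ?_) hcard
      have hxq : (2:ℝ) ^ (j - 2) * ((2:ℝ) ^ (j - 2)) ^ (q' - 1)
          = ((2:ℝ) ^ (j - 2)) ^ q' := by
        rw [Real.rpow_sub hx0, Real.rpow_one]
        field_simp
      push_cast
      rw [← hxq]
      ring
    have hLHS : ((2 ^ j : ℝ) / lowerDem N (2 ^ (j - 1))) ^ q'
        = (4:ℝ) ^ q' * (((2:ℝ) ^ (j - 2)) ^ q' / lowerDem N (2 ^ (j - 1)) ^ q') := by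
      rw [Real.div_rpow (by positivity) (lowerDem_nonneg hN _)]
      have h2j : (2:ℝ) ^ j = 4 * (2:ℝ) ^ (j - 2) := by
        have hj' : j = 2 + (j - 2) := by omega
        calc (2:ℝ) ^ j = (2:ℝ) ^ (2 + (j - 2)) := by conv_lhs => rw [hj']
          _ = 4 * (2:ℝ) ^ (j - 2) := by rw [pow_add]; norm_num
      rw [h2j, Real.mul_rpow (by norm_num) (le_of_lt hx0)]
      ring
    rw [hLHS]
    exact mul_le_mul_of_nonneg_left hblocksum (Real.rpow_nonneg (by norm_num) _)
  have hGsum : ∑ j ∈ Finset.Ico J T, ((2 ^ j : ℝ) / lowerDem N (2 ^ (j - 1))) ^ q'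
      ≤ (4:ℝ) ^ q' * δ := by
    have h1 : ∑ j ∈ Finset.Ico J T, ((2 ^ j : ℝ) / lowerDem N (2 ^ (j - 1))) ^ q'
        ≤ ∑ j ∈ Finset.Ico J T, (4:ℝ) ^ q' *
            ∑ m ∈ Finset.Ico (2 ^ (j - 2)) (2 ^ (j - 1)), H m :=
      Finset.sum_le_sum hterm
    have h2 : ∑ j ∈ Finset.Ico J T, ∑ m ∈ Finset.Ico (2 ^ (j - 2)) (2 ^ (j - 1)), H m
        = ∑ m ∈ Finset.Ico (2 ^ (J - 2)) (2 ^ (T - 2)), H m := by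
      have e1 : ∑ j ∈ Finset.Ico J T, ∑ m ∈ Finset.Ico (2 ^ (j - 2)) (2 ^ (j - 1)), H m
          = ∑ j' ∈ Finset.Ico (J - 2) (T - 2), ∑ m ∈ Finset.Ico (2 ^ j') (2 ^ (j' + 1)), H m := by
        rw [Finset.sum_Ico_eq_sum_range, Finset.sum_Ico_eq_sum_range]
        have hTT : T - 2 - (J - 2) = T - J := by omega
        rw [hTT]
        refine Finset.sum_congr rfl fun x _ => ?_
        have h1' : J + x - 2 = J - 2 + x := by omega
        have h2' : J + x - 1 = (J - 2 + x) + 1 := by omega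
        rw [h1', h2']
      rw [e1, dyadic_sum H (by omega : J - 2 ≤ T - 2)]
    have h3 : ∑ m ∈ Finset.Ico (2 ^ (J - 2)) (2 ^ (T - 2)), H m
        ≤ ∑' m, H (m + 2 ^ (J - 2)) := by
      rw [Finset.sum_Ico_eq_sum_range]
      have hsummable : Summable fun m => H (m + 2 ^ (J - 2)) :=
        (summable_nat_add_iff (2 ^ (J - 2))).2 hsumH
      refine le_trans (le_of_eq (Finset.sum_congr rfl fun x _ => by rw [add_comm])) ?_
      exact Summable.sum_le_tsum _ (fun i _ => hH0 _) hsummable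
    calc ∑ j ∈ Finset.Ico J T, ((2 ^ j : ℝ) / lowerDem N (2 ^ (j - 1))) ^ q'
        ≤ (4:ℝ) ^ q' * ∑ m ∈ Finset.Ico (2 ^ (J - 2)) (2 ^ (T - 2)), H m := by
          refine h1.trans (le_of_eq ?_)
          rw [← Finset.mul_sum, h2]
      _ ≤ (4:ℝ) ^ q' * δ := by
          refine mul_le_mul_of_nonneg_left ?_ (Real.rpow_nonneg (by norm_num) _)
          exact le_of_lt (lt_of_le_of_lt h3 hJtail)
  have hfac2 : (∑ j ∈ Finset.Ico J T, ((2 ^ j : ℝ) / lowerDem N (2 ^ (j - 1))) ^ q') ^ (1 / q')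
      ≤ 4 * (8 * C * K * R)⁻¹ := by
    have hG0' : 0 ≤ ∑ j ∈ Finset.Ico J T, ((2 ^ j : ℝ) / lowerDem N (2 ^ (j - 1))) ^ q' :=
      Finset.sum_nonneg fun j _ => hG0 j
    calc (∑ j ∈ Finset.Ico J T, ((2 ^ j : ℝ) / lowerDem N (2 ^ (j - 1))) ^ q') ^ (1 / q')
        ≤ ((4:ℝ) ^ q' * δ) ^ (1 / q') :=
          Real.rpow_le_rpow hG0' hGsum (by positivity)
      _ = 4 * (8 * C * K * R)⁻¹ := by
          rw [hδdef, Real.mul_rpow (Real.rpow_nonneg (by norm_num) _)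
            (Real.rpow_nonneg (by positivity) _)]
          rw [← Real.rpow_mul (by norm_num : (0:ℝ) ≤ 4),
            ← Real.rpow_mul (by positivity : (0:ℝ) ≤ (8 * C * K * R)⁻¹),
            mul_one_div_cancel (ne_of_gt hq'0), Real.rpow_one, Real.rpow_one]
  -- assemble part 2
  have hpart2 : ∑ i ∈ Finset.Ico (2 ^ J) (2 ^ T), a i ≤ N f / (2 * R) := by
    have hstep : ∑ i ∈ Finset.Ico (2 ^ J) (2 ^ T), a i
        ≤ ∑ j ∈ Finset.Ico J T, (2 ^ j : ℝ) * mj j := by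
      rw [← dyadic_sum a hJT]
      exact Finset.sum_le_sum fun j _ => hblock j
    have hmain : ∑ j ∈ Finset.Ico J T, (2 ^ j : ℝ) * mj j
        ≤ (C * (K * N f)) * (4 * (8 * C * K * R)⁻¹) := by
      refine le_trans hhold ?_
      refine mul_le_mul hfac1 hfac2 (Real.rpow_nonneg (Finset.sum_nonneg fun j _ => hG0 j) _) ?_
      have := hN.nonneg f; positivity
    have hcalc : (C * (K * N f)) * (4 * (8 * C * K * R)⁻¹) = N f / (2 * R) := by
      field_simp
      ring
    exact le_trans hstep (le_of_le_of_eq hmain hcalc)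
  -- assemble part 1
  have hpart1 : ∑ i ∈ Finset.range (2 ^ J), a i ≤ (2 ^ J : ℝ) * Sup := by
    calc ∑ i ∈ Finset.range (2 ^ J), a i
        ≤ (Finset.range (2 ^ J)).card • Sup :=
          Finset.sum_le_card_nsmul _ _ _ fun i _ => haSup i
      _ = (2 ^ J : ℝ) * Sup := by
          rw [Finset.card_range, nsmul_eq_mul]
          push_cast
          ring
  -- total
  have htotal : ∑ n ∈ f.support, |f n| ≤ (2 ^ J : ℝ) * Sup + N f / (2 * R) := by
    rw [hsum_eq]
    calc ∑ i ∈ Finset.range k, a i ≤ ∑ i ∈ Finset.range (2 ^ T), a i :=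
          Finset.sum_le_sum_of_subset_of_nonneg (Finset.range_subset_range.2 hkT)
            (fun i _ _ => ha0 i)
      _ = ∑ i ∈ Finset.range (2 ^ J), a i + ∑ i ∈ Finset.Ico (2 ^ J) (2 ^ T), a i :=
          (Finset.sum_range_add_sum_Ico a (Nat.pow_le_pow_right (by norm_num) hJT)).symm
      _ ≤ (2 ^ J : ℝ) * Sup + N f / (2 * R) := add_le_add hpart1 hpart2
  refine le_trans htotal ?_
  rcases le_total ((2 ^ J : ℝ) * Sup) (N f / (2 * R)) with h | h
  · calc (2 ^ J : ℝ) * Sup + N f / (2 * R) ≤ N f / (2 * R) + N f / (2 * R) := by linarith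
      _ = N f / R := by field_simp; ring
      _ ≤ max (2 * 2 ^ J * Sup) (N f / R) := le_max_right _ _
  · calc (2 ^ J : ℝ) * Sup + N f / (2 * R) ≤ (2 ^ J : ℝ) * Sup + (2 ^ J : ℝ) * Sup := by linarith
      _ = 2 * 2 ^ J * Sup := by ring
      _ ≤ max (2 * 2 ^ J * Sup) (N f / R) := le_max_left _ _
end

section
/- (Proposition 6.9 of the paper: strong absoluteness of the unit vector system of an Orlicz sequence space, stated via the Luxemburg modular.) Let F : [0,∞) → [0,∞) be increasing with F(0) = 0, F(1) = 1 and F(t) > 0 for t > 0; put G(t) = t/F(t) for t > 0. Suppose there is C ≥ 1 with G(s) ≤ C·G(t) whenever 0 < s ≤ t ≤ 1, and that lim_{t→0⁺} G(t) = 0. Then for every R > 0 there exists a constant C′ > 0 (one may take C′ = C/F(δ) for any δ ∈ (0,1] such that G(t) ≤ 1/(R·C) for all 0 < t ≤ δ) with the following property: for every finitely supported a : ℕ → ℝ and every ρ > 0 such that sup_n |a(n)| ≤ ρ and ∑_n F(|a(n)|/ρ) ≤ 1, one has ∑_n |a(n)| ≤ max( C′·sup_n |a(n)|, ρ/R ).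 (Since the Luxemburg quasi-norm of a in the Orlicz sequence space ℓ_F is the infimum of such ρ, this is exactly the strong absoluteness of the unit vector basis of ℓ_F.) -/
/-- Proposition 6.9: strong absoluteness of the unit vector system of
an Orlicz sequence space, stated via the Luxemburg modular.  `F` is a normalized
Orlicz function, `G t = t / F t` is essentially bounded by `C` on `(0,1]` in the
monotone sense, and `G → 0` at `0⁺`.  Then for every `R > 0` there is `C' > 0` such
that whenever `ρ > 0` bounds `supₙ |a n|` and the modular `∑ₙ F(|a n|/ρ) ≤ 1`, one
has `∑ₙ |a n| ≤ max (C'·supₙ |a n|) (ρ/R)`. -/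
theorem stmt17 (F : ℝ → ℝ) (hF0 : F 0 = 0) (hF1 : F 1 = 1)
    (hFpos : ∀ t : ℝ, 0 < t → 0 < F t)
    (hFmono : ∀ s t : ℝ, 0 ≤ s → s ≤ t → F s ≤ F t)
    (C : ℝ) (hC : 1 ≤ C)
    (hG : ∀ s t : ℝ, 0 < s → s ≤ t → t ≤ 1 → s / F s ≤ C * (t / F t))
    (hG0 : Filter.Tendsto (fun t : ℝ => t / F t)
      (nhdsWithin 0 (Set.Ioi 0)) (nhds 0)) :
    ∀ R : ℝ, 0 < R → ∃ C' > 0, ∀ (a : ℕ →₀ ℝ) (ρ : ℝ), 0 < ρ →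
      (∀ n, |a n| ≤ ρ) → (∑ n ∈ a.support, F (|a n| / ρ)) ≤ 1 →
      ∑ n ∈ a.support, |a n| ≤ max (C' * ⨆ n, |a n|) (ρ / R) := by
  intro R hR
  have h2R : (0:ℝ) < 1 / (2 * R) := by positivity
  have hev : ∀ᶠ t in nhdsWithin (0:ℝ) (Set.Ioi 0), t / F t < 1 / (2 * R) :=
    hG0.eventually_lt_const h2R
  rw [eventually_nhdsWithin_iff, Metric.eventually_nhds_iff] at hev
  obtain ⟨ε, hε, hev⟩ := hev
  set δ : ℝ := min (ε / 2) 1 with hδdef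
  have hδpos : 0 < δ := lt_min (by linarith) one_pos
  have hδ1 : δ ≤ 1 := min_le_right _ _
  have hδsmall : ∀ t : ℝ, 0 < t → t ≤ δ → t / F t ≤ 1 / (2 * R) := by
    intro t ht htδ
    have : dist t 0 < ε := by
      rw [Real.dist_eq, sub_zero, abs_of_pos ht]
      have := le_trans htδ (min_le_left (ε/2) 1)
      linarith
    exact (hev this ht).le
  have hFδ : 0 < F δ := hFpos δ hδpos
  refine ⟨2 / F δ, by positivity, ?_⟩
  intro a ρ hρ hbound hmod
  have hbdd : BddAbove (Set.range fun n => |a n|) :=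
    ⟨ρ, by rintro x ⟨n, rfl⟩; exact hbound n⟩
  set M := ⨆ n, |a n| with hM
  have hMle : ∀ n, |a n| ≤ M := fun n => le_ciSup hbdd n
  have hM0 : 0 ≤ M := le_trans (abs_nonneg _) (hMle 0)
  have hapos : ∀ n ∈ a.support, 0 < |a n| := by
    intro n hn
    exact abs_pos.mpr (Finsupp.mem_support_iff.mp hn)
  have hFnn : ∀ n ∈ a.support, 0 ≤ F (|a n| / ρ) := by
    intro n hn
    exact (hFpos _ (div_pos (hapos n hn) hρ)).le
  set S1 := a.support.filter (fun n => |a n| ≤ δ * ρ) with hS1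
  set S2 := a.support.filter (fun n => ¬ |a n| ≤ δ * ρ) with hS2
  have hsplit : ∑ n ∈ a.support, |a n| = ∑ n ∈ S1, |a n| + ∑ n ∈ S2, |a n| :=
    (Finset.sum_filter_add_sum_filter_not _ _ _).symm
  -- bound on S1
  have h1 : ∑ n ∈ S1, |a n| ≤ ρ / (2 * R) := by
    have hterm : ∀ n ∈ S1, |a n| ≤ 1 / (2 * R) * F (|a n| / ρ) * ρ := by
      intro n hn
      obtain ⟨hn', hle⟩ := Finset.mem_filter.mp hn
      set t := |a n| / ρ with ht
      have htpos : 0 < t := div_pos (hapos n hn') hρ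
      have htδ : t ≤ δ := (div_le_iff₀ hρ).mpr (by linarith [hle])
      have hFt : 0 < F t := hFpos t htpos
      have : |a n| = (t / F t) * F t * ρ := by
        field_simp [ht]; rw [ht, div_mul_cancel₀ _ hρ.ne']
      rw [this]
      have := hδsmall t htpos htδ
      have h2 : (t / F t) * F t ≤ 1 / (2 * R) * F t :=
        mul_le_mul_of_nonneg_right this hFt.le
      exact mul_le_mul_of_nonneg_right h2 hρ.le
    calc ∑ n ∈ S1, |a n| ≤ ∑ n ∈ S1, 1 / (2 * R) * F (|a n| / ρ) * ρ :=
          Finset.sum_le_sum hterm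
      _ = 1 / (2 * R) * ρ * ∑ n ∈ S1, F (|a n| / ρ) := by
          rw [Finset.mul_sum]; apply Finset.sum_congr rfl; intro n _; ring
      _ ≤ 1 / (2 * R) * ρ * 1 := by
          apply mul_le_mul_of_nonneg_left _ (by positivity)
          refine le_trans (Finset.sum_le_sum_of_subset_of_nonneg
            (Finset.filter_subset _ _) ?_) hmod
          intro n hn _; exact hFnn n hn
      _ = ρ / (2 * R) := by ring
  -- bound on S2
  have hcard : (S2.card : ℝ) * F δ ≤ 1 := by
    calc (S2.card : ℝ) * F δ = ∑ _n ∈ S2, F δ := by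
          rw [Finset.sum_const, nsmul_eq_mul]
      _ ≤ ∑ n ∈ S2, F (|a n| / ρ) := by
          apply Finset.sum_le_sum
          intro n hn
          obtain ⟨hn', hgt⟩ := Finset.mem_filter.mp hn
          push_neg at hgt
          exact hFmono δ _ hδpos.le ((le_div_iff₀ hρ).mpr hgt.le)
      _ ≤ ∑ n ∈ a.support, F (|a n| / ρ) := by
          refine Finset.sum_le_sum_of_subset_of_nonneg
            (Finset.filter_subset _ _) ?_
          intro n hn _; exact hFnn n hn
      _ ≤ 1 := hmod
  have h2 : ∑ n ∈ S2, |a n| ≤ M / F δ := by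
    calc ∑ n ∈ S2, |a n| ≤ ∑ _n ∈ S2, M :=
          Finset.sum_le_sum (fun n _ => hMle n)
      _ = (S2.card : ℝ) * M := by rw [Finset.sum_const, nsmul_eq_mul]
      _ ≤ (1 / F δ) * M := by
          apply mul_le_mul_of_nonneg_right _ hM0
          rw [le_div_iff₀ hFδ] at *
          linarith [hcard]
      _ = M / F δ := by ring
  rw [hsplit]
  rcases le_or_gt (ρ / (2 * R)) (M / F δ) with h | h
  · refine le_trans ?_ (le_max_left _ _)
    have : 2 / F δ * M = M / F δ + M / F δ := by field_simp; ring
    rw [this]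
    exact add_le_add (le_trans h1 h) h2
  · refine le_trans ?_ (le_max_right _ _)
    have : ρ / R = ρ / (2 * R) + ρ / (2 * R) := by field_simp; ring
    rw [this]
    exact add_le_add h1 (le_trans h2 h.le)
end

section
/- (Core inequalities in the theorem of Section 6.5: a right-dominant unconditional basis almost-isometrically controls disjointly supported sequences by single basis vectors.) Let κ, K, D ≥ 1 and let N be a normalized K-unconditional coefficient quasi-norm satisfying N(f + g) ≤ κ·(N(f) + N(g)) for all finitely supported f, g. Assume N is right D-dominant: whenever (f_i)_{i=1}^k and (g_i)_{i=1}^k are families of finitely supported functions, each family having pairwise disjoint supports, such that for every i one has max(supp g_i) < min(supp f_i) and N(f_i) ≤ N(g_i), then N(∑_i f_i) ≤ D·N(∑_i g_i). Let u_1, …, u_M be nonzero finitely supported functions with pairwise disjoint supports and 0 < a ≤ N(u_m) ≤ b for all m; set j_m = min(supp u_m) and k_m = max(supp u_m). Then for all scalars c_1, …, c_M: N(∑_m c_m·u_m) ≤ 2κK²Db·N(∑_m c_m·e_{j_m}) and N(∑_m c_m·u_m) ≥ (a/(2κ²KD))·N(∑_m c_m·e_{k_m}). -/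
/-- Pointwise comparison of two sums where the dominating family has pairwise
disjoint supports. -/
lemma abs_apply_sum_le {M : ℕ} (p v : Fin M → (ℕ →₀ ℝ))
    (hd : ∀ i j, i ≠ j → Disjoint (v i).support (v j).support)
    (h : ∀ i n, |p i n| ≤ |v i n|) (n : ℕ) :
    |(∑ i, p i) n| ≤ |(∑ i, v i) n| := by
  rw [Finsupp.finset_sum_apply, Finsupp.finset_sum_apply]
  by_cases hex : ∃ i, v i n ≠ 0
  · obtain ⟨i₀, hi₀⟩ := hex
    have hv : ∀ i, i ≠ i₀ → v i n = 0 := by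
      intro i hi
      by_contra hvi
      exact Finset.disjoint_left.mp (hd i i₀ hi) (Finsupp.mem_support_iff.mpr hvi)
        (Finsupp.mem_support_iff.mpr hi₀)
    have hp : ∀ i, i ≠ i₀ → p i n = 0 := by
      intro i hi
      have := h i n
      rw [hv i hi] at this
      simpa using abs_nonpos_iff.mp (by simpa using this)
    rw [Finset.sum_eq_single i₀ (fun i _ hi => hp i hi) (by simp),
        Finset.sum_eq_single i₀ (fun i _ hi => hv i hi) (by simp)]
    exact h i₀ n
  · push_neg at hex
    have hp : ∀ i, p i n = 0 := by
      intro i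
      have := h i n
      rw [hex i] at this
      simpa using abs_nonpos_iff.mp (by simpa using this)
    simp [hex, hp]

lemma N_single {K : ℝ} {N : (ℕ →₀ ℝ) → ℝ} (hN : IsCoeffQuasiNorm K N) (n : ℕ) (x : ℝ) :
    N (Finsupp.single n x) = |x| := by
  have h : Finsupp.single n x = x • Finsupp.single n (1 : ℝ) := by
    rw [Finsupp.smul_single', mul_one]
  rw [h, hN.smul, hN.normalized, mul_one]

lemma N_erase_le {K : ℝ} {N : (ℕ →₀ ℝ) → ℝ} (hN : IsCoeffQuasiNorm K N)
    (a : ℕ) (f : ℕ →₀ ℝ) : N (f.erase a) ≤ K * N f := by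
  refine hN.uncond _ _ (fun n => ?_)
  rw [Finsupp.erase_apply]
  split
  · simpa using abs_nonneg (f n)
  · exact le_rfl

set_option maxHeartbeats 1000000 in
/-- core inequalities of the theorem in Section 6.5: if `N` has
modulus of concavity `κ` and is right `D`-dominant, and `u₁, …, u_M` are nonzero
disjointly supported vectors with `a ≤ N(u_m) ≤ b`, then with
`j_m = min (supp u_m)` and `k_m = max (supp u_m)` one has, for all scalars `c`,
`N(∑ c_m u_m) ≤ 2κK²Db·N(∑ c_m e_{j_m})` and
`N(∑ c_m u_m) ≥ (a/(2κ²KD))·N(∑ c_m e_{k_m})`. -/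
theorem stmt18 (κ K D : ℝ) (hκ : 1 ≤ κ) (hK : 1 ≤ K) (hD : 1 ≤ D)
    (N : (ℕ →₀ ℝ) → ℝ) (hN : IsCoeffQuasiNorm K N)
    (hquasi : ∀ f g : ℕ →₀ ℝ, N (f + g) ≤ κ * (N f + N g))
    (hdom : ∀ (k : ℕ) (f g : Fin k → (ℕ →₀ ℝ)),
      (∀ i j, i ≠ j → Disjoint (f i).support (f j).support) →
      (∀ i j, i ≠ j → Disjoint (g i).support (g j).support) →
      (∀ i, ∀ m ∈ (g i).support, ∀ n ∈ (f i).support, m < n) →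
      (∀ i, N (f i) ≤ N (g i)) →
      N (∑ i, f i) ≤ D * N (∑ i, g i))
    (M : ℕ) (u : Fin M → (ℕ →₀ ℝ)) (hu : ∀ m, u m ≠ 0)
    (hdisj : ∀ i j, i ≠ j → Disjoint (u i).support (u j).support)
    (a b : ℝ) (ha : 0 < a)
    (hab : ∀ m, a ≤ N (u m) ∧ N (u m) ≤ b) :
    ∀ c : Fin M → ℝ,
      N (∑ m, c m • u m) ≤ (2 * κ * K ^ 2 * D * b) *
          N (∑ m, c m • Finsupp.single
            ((u m).support.min' (Finsupp.support_nonempty_iff.mpr (hu m)))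
            (1 : ℝ)) ∧
      (a / (2 * κ ^ 2 * K * D)) *
          N (∑ m, c m • Finsupp.single
            ((u m).support.max' (Finsupp.support_nonempty_iff.mpr (hu m)))
            (1 : ℝ)) ≤
        N (∑ m, c m • u m) := by
  intro c
  have hκ0 : (0:ℝ) < κ := lt_of_lt_of_le one_pos hκ
  have hK0 : (0:ℝ) < K := lt_of_lt_of_le one_pos hK
  have hD0 : (0:ℝ) < D := lt_of_lt_of_le one_pos hD
  have hNz : N 0 = 0 := (hN.eq_zero_iff 0).mpr rfl
  rcases Nat.eq_zero_or_pos M with hM | hM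
  · subst hM
    constructor <;> simp [hNz]
  have hb : 0 < b := by
    have h0 := hab ⟨0, hM⟩
    linarith [h0.1, h0.2]
  -- Part 1, generalized over the choice of left endpoints
  have key₁ : ∀ (j : Fin M → ℕ), (∀ m, j m ∈ (u m).support) →
      (∀ m, ∀ n ∈ (u m).support, j m ≤ n) →
      N (∑ m, c m • u m) ≤ (2 * κ * K ^ 2 * D * b) *
        N (∑ m, c m • Finsupp.single (j m) (1:ℝ)) := by
    intro j hjmem hjmin
    have hjinj : Function.Injective j := by
      intro i i' h
      by_contra hne'
      have h1 : j i ∈ (u i').support := by rw [h]; exact hjmem i'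
      exact Finset.disjoint_left.mp (hdisj i i' hne') (hjmem i) h1
    set v := ∑ m, c m • Finsupp.single (j m) (1:ℝ) with hv
    have hNv : 0 ≤ N v := hN.nonneg v
    have habs : ∀ m, |u m (j m)| ≤ K * b := by
      intro m
      have h1 : N (Finsupp.single (j m) (u m (j m))) ≤ K * N (u m) := by
        refine hN.uncond _ _ (fun n => ?_)
        rw [Finsupp.single_apply]
        by_cases h : j m = n
        · rw [if_pos h, h]
        · rw [if_neg h]; simpa using abs_nonneg (u m n)
      rw [N_single hN] at h1
      have h2 : K * N (u m) ≤ K * b := mul_le_mul_of_nonneg_left (hab m).2 hK0.le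
      linarith
    have hsplit : (∑ m, c m • u m)
        = (∑ m, c m • Finsupp.single (j m) (u m (j m)))
          + (∑ m, c m • (u m).erase (j m)) := by
      rw [← Finset.sum_add_distrib]
      refine Finset.sum_congr rfl (fun m _ => ?_)
      rw [← smul_add, Finsupp.single_add_erase]
    have hKbv : (∑ m, (K * b * c m) • Finsupp.single (j m) (1:ℝ)) = (K * b) • v := by
      rw [hv, Finset.smul_sum]
      exact Finset.sum_congr rfl (fun m _ => by rw [smul_smul])
    have hgd : ∀ i i' : Fin M, i ≠ i' →
        Disjoint ((K * b * c i) • Finsupp.single (j i) (1:ℝ)).support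
          ((K * b * c i') • Finsupp.single (j i') (1:ℝ)).support := by
      intro i i' h
      refine Disjoint.mono (Finsupp.support_smul.trans Finsupp.support_single_subset)
        (Finsupp.support_smul.trans Finsupp.support_single_subset) ?_
      exact Finset.disjoint_singleton.mpr (fun he => h (hjinj he))
    have htop : N (∑ m, c m • Finsupp.single (j m) (u m (j m))) ≤ K * (K * b * N v) := by
      have hpt : ∀ n, |(∑ m, c m • Finsupp.single (j m) (u m (j m))) n|
          ≤ |((K * b) • v) n| := by
        intro n
        rw [← hKbv]
        refine abs_apply_sum_le _ _ hgd (fun i n' => ?_) n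
        rw [Finsupp.smul_apply, Finsupp.smul_apply, Finsupp.single_apply,
          Finsupp.single_apply]
        by_cases h : j i = n'
        · rw [if_pos h, if_pos h, smul_eq_mul, smul_eq_mul, mul_one]
          calc |c i * u i (j i)| = |c i| * |u i (j i)| := abs_mul _ _
            _ ≤ |c i| * (K * b) := mul_le_mul_of_nonneg_left (habs i) (abs_nonneg _)
            _ = |K * b * c i| := by
                rw [abs_mul, abs_of_pos (show (0:ℝ) < K * b by positivity)]; ring
        · rw [if_neg h, if_neg h]; simp
      calc N (∑ m, c m • Finsupp.single (j m) (u m (j m)))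
          ≤ K * N ((K * b) • v) := hN.uncond _ _ hpt
        _ = K * (K * b * N v) := by
            rw [hN.smul, abs_of_pos (show (0:ℝ) < K * b by positivity)]
    have herase : N (∑ m, c m • (u m).erase (j m)) ≤ D * (K * b * N v) := by
      have hfd : ∀ i i' : Fin M, i ≠ i' →
          Disjoint (c i • (u i).erase (j i)).support
            (c i' • (u i').erase (j i')).support := by
        intro i i' h
        refine Disjoint.mono ?_ ?_ (hdisj i i' h) <;>
          exact Finsupp.support_smul.trans
            (by rw [Finsupp.support_erase]; exact Finset.erase_subset _ _)
      have hlt : ∀ i : Fin M,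
          ∀ m' ∈ ((K * b * c i) • Finsupp.single (j i) (1:ℝ)).support,
          ∀ n ∈ (c i • (u i).erase (j i)).support, m' < n := by
        intro i m' hm' n hn
        have hm'' : m' = j i := by
          have hmem := Finset.mem_of_subset
            (Finsupp.support_smul.trans Finsupp.support_single_subset) hm'
          simpa using hmem
        have hn' : n ∈ ((u i).erase (j i)).support := Finset.mem_of_subset Finsupp.support_smul hn
        rw [Finsupp.support_erase] at hn'
        have hne2 : n ≠ j i := Finset.ne_of_mem_erase hn'
        have hmem2 : n ∈ (u i).support := Finset.mem_of_mem_erase hn'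
        rw [hm'']
        exact lt_of_le_of_ne (hjmin i n hmem2) (Ne.symm hne2)
      have hle : ∀ i : Fin M, N (c i • (u i).erase (j i))
          ≤ N ((K * b * c i) • Finsupp.single (j i) (1:ℝ)) := by
        intro i
        rw [hN.smul, hN.smul, hN.normalized, mul_one, abs_mul,
          abs_of_pos (show (0:ℝ) < K * b by positivity)]
        have h1 : N ((u i).erase (j i)) ≤ K * N (u i) := N_erase_le hN _ _
        have h2 : K * N (u i) ≤ K * b := mul_le_mul_of_nonneg_left (hab i).2 hK0.le
        have h3 : |c i| * N ((u i).erase (j i)) ≤ |c i| * (K * b) :=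
          mul_le_mul_of_nonneg_left (by linarith) (abs_nonneg _)
        linarith
      have hd := hdom M _ _ hfd hgd hlt hle
      rw [hKbv, hN.smul, abs_of_pos (show (0:ℝ) < K * b by positivity)] at hd
      linarith
    have hKD : K + D ≤ 2 * (K * D) := by nlinarith
    have hP : 0 ≤ κ * (K * b) * N v := by positivity
    calc N (∑ m, c m • u m)
        = N ((∑ m, c m • Finsupp.single (j m) (u m (j m)))
            + (∑ m, c m • (u m).erase (j m))) := by rw [hsplit]
      _ ≤ κ * (N (∑ m, c m • Finsupp.single (j m) (u m (j m)))
            + N (∑ m, c m • (u m).erase (j m))) := hquasi _ _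
      _ ≤ κ * (K * (K * b * N v) + D * (K * b * N v)) := by
          have := mul_le_mul_of_nonneg_left (add_le_add htop herase) hκ0.le
          linarith
      _ = (K + D) * (κ * (K * b) * N v) := by ring
      _ ≤ (2 * (K * D)) * (κ * (K * b) * N v) := mul_le_mul_of_nonneg_right hKD hP
      _ = (2 * κ * K ^ 2 * D * b) * N v := by ring
  -- Part 2, generalized over the choice of right endpoints
  have key₂ : ∀ (k : Fin M → ℕ), (∀ m, k m ∈ (u m).support) →
      (∀ m, ∀ n ∈ (u m).support, n ≤ k m) →
      (a / (2 * κ ^ 2 * K * D)) * N (∑ m, c m • Finsupp.single (k m) (1:ℝ))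
        ≤ N (∑ m, c m • u m) := by
    intro k hkmem hkmax
    have hkinj : Function.Injective k := by
      intro i i' h
      by_contra hne'
      have h1 : k i ∈ (u i').support := by rw [h]; exact hkmem i'
      exact Finset.disjoint_left.mp (hdisj i i' hne') (hkmem i) h1
    set w := ∑ m, c m • u m with hw
    have hNw : 0 ≤ N w := hN.nonneg w
    set v' := ∑ m, c m • Finsupp.single (k m) (1:ℝ) with hv'
    set α : Fin M → ℝ := fun m => |u m (k m)| with hα
    set β : Fin M → ℝ := fun m => N ((u m).erase (k m)) with hβ
    have hα0 : ∀ m, 0 ≤ α m := fun m => abs_nonneg _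
    have hβ0 : ∀ m, 0 ≤ β m := fun m => hN.nonneg _
    have hαβ : ∀ m, a / κ ≤ α m + β m := by
      intro m
      have h1 : N (u m) ≤ κ * (β m + α m) := by
        calc N (u m) = N ((u m).erase (k m) + Finsupp.single (k m) (u m (k m))) := by
              rw [Finsupp.erase_add_single]
          _ ≤ κ * (N ((u m).erase (k m)) + N (Finsupp.single (k m) (u m (k m)))) :=
              hquasi _ _
          _ = κ * (β m + α m) := by rw [N_single hN]
      have h2 : a ≤ κ * (β m + α m) := le_trans (hab m).1 h1
      rw [div_le_iff₀ hκ0]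
      nlinarith
    have hαβ0 : ∀ m, 0 < α m + β m :=
      fun m => lt_of_lt_of_le (by positivity) (hαβ m)
    set γ : Fin M → ℝ := fun m => (a / κ) / (α m + β m) with hγ
    have hγ0 : ∀ m, 0 ≤ γ m := fun m => div_nonneg (by positivity) (hαβ0 m).le
    have hγ1 : ∀ m, γ m ≤ 1 := fun m => (div_le_one (hαβ0 m)).mpr (hαβ m)
    have hγs : ∀ m, (α m + β m) * γ m = a / κ := by
      intro m
      have hne0 : α m + β m ≠ 0 := (hαβ0 m).ne'
      rw [hγ]
      field_simp
    have hS : (a / κ) • v'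
        = (∑ m, (c m * (α m * γ m)) • Finsupp.single (k m) (1:ℝ))
          + (∑ m, (c m * (β m * γ m)) • Finsupp.single (k m) (1:ℝ)) := by
      rw [hv', Finset.smul_sum, ← Finset.sum_add_distrib]
      refine Finset.sum_congr rfl (fun m _ => ?_)
      rw [smul_smul, ← add_smul]
      congr 1
      rw [← hγs m]
      ring
    -- the w-family is disjointly supported
    have hwd : ∀ i i' : Fin M, i ≠ i' →
        Disjoint (c i • u i).support (c i' • u i').support :=
      fun i i' h => Disjoint.mono Finsupp.support_smul Finsupp.support_smul (hdisj i i' h)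
    have hNS : N (∑ m, (c m * (α m * γ m)) • Finsupp.single (k m) (1:ℝ)) ≤ K * N w := by
      refine hN.uncond _ _ (fun n => ?_)
      rw [hw]
      refine abs_apply_sum_le _ (fun m => c m • u m) hwd (fun i n' => ?_) n
      rw [Finsupp.smul_apply, Finsupp.smul_apply, Finsupp.single_apply]
      by_cases h : k i = n'
      · rw [if_pos h, ← h, smul_eq_mul, smul_eq_mul, mul_one]
        have e1 : |c i * (α i * γ i)| = |c i| * (α i * γ i) := by
          rw [abs_mul, abs_of_nonneg (mul_nonneg (hα0 i) (hγ0 i))]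
        have e2 : |c i * u i (k i)| = |c i| * α i := by
          rw [abs_mul, hα]
        rw [e1, e2]
        have h3 : α i * γ i ≤ α i := by nlinarith [hγ1 i, hα0 i, hγ0 i]
        exact mul_le_mul_of_nonneg_left h3 (abs_nonneg _)
      · rw [if_neg h, smul_zero]
        simpa using abs_nonneg ((c i • u i) n')
    have hNG : N (∑ m, c m • (u m).erase (k m)) ≤ K * N w := by
      refine hN.uncond _ _ (fun n => ?_)
      rw [hw]
      refine abs_apply_sum_le _ (fun m => c m • u m) hwd (fun i n' => ?_) n
      rw [Finsupp.smul_apply, Finsupp.smul_apply, smul_eq_mul, smul_eq_mul,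
        Finsupp.erase_apply]
      by_cases h : n' = k i
      · rw [if_pos h, mul_zero]
        simpa using abs_nonneg (c i * u i n')
      · rw [if_neg h]
    have hNT : N (∑ m, (c m * (β m * γ m)) • Finsupp.single (k m) (1:ℝ))
        ≤ D * (K * N w) := by
      have hfd : ∀ i i' : Fin M, i ≠ i' →
          Disjoint ((c i * (β i * γ i)) • Finsupp.single (k i) (1:ℝ)).support
            ((c i' * (β i' * γ i')) • Finsupp.single (k i') (1:ℝ)).support := by
        intro i i' h
        refine Disjoint.mono (Finsupp.support_smul.trans Finsupp.support_single_subset)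
          (Finsupp.support_smul.trans Finsupp.support_single_subset) ?_
        exact Finset.disjoint_singleton.mpr (fun he => h (hkinj he))
      have hgd : ∀ i i' : Fin M, i ≠ i' →
          Disjoint (c i • (u i).erase (k i)).support
            (c i' • (u i').erase (k i')).support := by
        intro i i' h
        refine Disjoint.mono ?_ ?_ (hdisj i i' h) <;>
          exact Finsupp.support_smul.trans
            (by rw [Finsupp.support_erase]; exact Finset.erase_subset _ _)
      have hlt : ∀ i : Fin M, ∀ m' ∈ (c i • (u i).erase (k i)).support,
          ∀ n ∈ ((c i * (β i * γ i)) • Finsupp.single (k i) (1:ℝ)).support, m' < n := by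
        intro i m' hm' n hn
        have hn' : n = k i := by
          have hmem := Finset.mem_of_subset
            (Finsupp.support_smul.trans Finsupp.support_single_subset) hn
          simpa using hmem
        have hm2 : m' ∈ ((u i).erase (k i)).support :=
          Finset.mem_of_subset Finsupp.support_smul hm'
        rw [Finsupp.support_erase] at hm2
        have hne2 : m' ≠ k i := Finset.ne_of_mem_erase hm2
        have hmem2 : m' ∈ (u i).support := Finset.mem_of_mem_erase hm2
        rw [hn']
        exact lt_of_le_of_ne (hkmax i m' hmem2) hne2
      have hle : ∀ i : Fin M,
          N ((c i * (β i * γ i)) • Finsupp.single (k i) (1:ℝ))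
            ≤ N (c i • (u i).erase (k i)) := by
        intro i
        rw [hN.smul, hN.smul, hN.normalized, mul_one, abs_mul]
        have e1 : |β i * γ i| = β i * γ i := abs_of_nonneg (mul_nonneg (hβ0 i) (hγ0 i))
        rw [e1]
        have h3 : β i * γ i ≤ β i := by nlinarith [hγ1 i, hβ0 i, hγ0 i]
        calc |c i| * (β i * γ i) ≤ |c i| * β i :=
              mul_le_mul_of_nonneg_left h3 (abs_nonneg _)
          _ = |c i| * N ((u i).erase (k i)) := by rw [hβ]
      have hd := hdom M _ _ hfd hgd hlt hle
      calc N (∑ m, (c m * (β m * γ m)) • Finsupp.single (k m) (1:ℝ))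
          ≤ D * N (∑ m, c m • (u m).erase (k m)) := hd
        _ ≤ D * (K * N w) := mul_le_mul_of_nonneg_left hNG hD0.le
    have hfinal : (a / κ) * N v' ≤ κ * (K * N w + D * (K * N w)) := by
      have h1 : N ((a / κ) • v') = (a / κ) * N v' := by
        rw [hN.smul, abs_of_pos (by positivity)]
      calc (a / κ) * N v' = N ((a / κ) • v') := h1.symm
        _ = N ((∑ m, (c m * (α m * γ m)) • Finsupp.single (k m) (1:ℝ))
              + (∑ m, (c m * (β m * γ m)) • Finsupp.single (k m) (1:ℝ))) := by rw [hS]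
        _ ≤ κ * (N (∑ m, (c m * (α m * γ m)) • Finsupp.single (k m) (1:ℝ))
              + N (∑ m, (c m * (β m * γ m)) • Finsupp.single (k m) (1:ℝ))) := hquasi _ _
        _ ≤ κ * (K * N w + D * (K * N w)) := by
            have := mul_le_mul_of_nonneg_left (add_le_add hNS hNT) hκ0.le
            linarith
    rw [div_mul_eq_mul_div, div_le_iff₀ (by positivity : (0:ℝ) < 2 * κ ^ 2 * K * D)]
    have e : κ * ((a / κ) * N v') = a * N v' := by
      field_simp
    have h5 : a * N v' ≤ κ * (κ * (K * N w + D * (K * N w))) := by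
      rw [← e]
      exact mul_le_mul_of_nonneg_left hfinal hκ0.le
    nlinarith [mul_nonneg (mul_nonneg (mul_nonneg (sq_nonneg κ) hK0.le) hNw)
      (sub_nonneg.mpr hD)]
  exact ⟨key₁ (fun m => (u m).support.min' (Finsupp.support_nonempty_iff.mpr (hu m)))
      (fun m => Finset.min'_mem _ _) (fun m n hn => Finset.min'_le _ _ hn),
    key₂ (fun m => (u m).support.max' (Finsupp.support_nonempty_iff.mpr (hu m)))
      (fun m => Finset.max'_mem _ _) (fun m n hn => Finset.le_max' _ _ hn)⟩
end

section
/- (Lemma 3.10 of the paper, conclusions (b) and (c), in coefficient form.) Let N be a normalized K-unconditional coefficient quasi-norm and write ⟨g,f⟩ = ∑_n g(n)·f(n). Let (y_m)_{m∈M} be a finite or countable family of finitely supported functions with pairwise disjoint supports, and let (g_m)_{m∈M} be finitely supported functions with supp g_m ⊆ supp y_m and ⟨g_m, y_{m'}⟩ = δ_{m,m'} for all m, m′ ∈ M (good projecting functionals). Suppose the family is well C-complemented: for every finitely supported f : ℕ → ℝ and every finite subset M′ ⊆ M, N(∑_{m∈M′} ⟨g_m, f⟩·y_m) ≤ C·N(f).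 Let D₁, D₂, D₃ > 0, and let (u_m)_{m∈M} and (h_m)_{m∈M} be finitely supported functions such that for all m and n: (i) |u_m(n)| ≤ D₁·|y_m(n)|; (ii) |h_m(n)| ≤ D₂·|g_m(n)|; and (iii) |⟨h_m, u_m⟩| ≥ 1/D₃. Then for every finitely supported family of scalars (c_m)_{m∈M}: N(∑_m c_m·u_m) ≤ D₁·K·N(∑_m c_m·y_m), and N(∑_m c_m·y_m) ≤ C·D₂·D₃·K²·N(∑_m c_m·u_m). -/
/-- If `(y m)` have pairwise disjoint supports and each `v m` is supported
inside `supp (y m)`, then a sum `∑ c m • v m` evaluated at a point in the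
support of `y m₀` reduces to the `m₀` term. -/
lemma stmt19_single_term {ι : Type} (S : Finset ι) (c : ι → ℝ)
    (v y : ι → (ℕ →₀ ℝ))
    (hv : ∀ m n, y m n = 0 → v m n = 0)
    (hyd : ∀ i j, i ≠ j → Disjoint (y i).support (y j).support)
    (n : ℕ) (m₀ : ι) (hm₀ : m₀ ∈ S) (hy : y m₀ n ≠ 0) :
    (∑ m ∈ S, c m • v m) n = c m₀ * v m₀ n := by
  rw [Finsupp.finset_sum_apply]
  have : ∀ m ∈ S, m ≠ m₀ → (c m • v m) n = 0 := by
    intro m _ hm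
    have hymn : y m n = 0 := by
      by_contra hne
      have h1 : n ∈ (y m).support := Finsupp.mem_support_iff.mpr hne
      have h2 : n ∈ (y m₀).support := Finsupp.mem_support_iff.mpr hy
      exact (Finset.disjoint_left.mp (hyd m m₀ hm) h1) h2
    simp [hv m n hymn]
  rw [Finset.sum_eq_single m₀ this (fun hn => absurd hm₀ hn)]
  simp

/-- If `y m n = 0` for all `m ∈ S`, the sum vanishes at `n`. -/
lemma stmt19_zero_term {ι : Type} (S : Finset ι) (c : ι → ℝ)
    (v y : ι → (ℕ →₀ ℝ))
    (hv : ∀ m n, y m n = 0 → v m n = 0)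
    (n : ℕ) (hz : ∀ m ∈ S, y m n = 0) :
    (∑ m ∈ S, c m • v m) n = 0 := by
  rw [Finsupp.finset_sum_apply]
  refine Finset.sum_eq_zero fun m hm => ?_
  simp [hv m n (hz m hm)]

set_option maxHeartbeats 1000000 in
/-- Lemma 3.10, conclusions (b) and (c), in coefficient form.
`⟨g,f⟩ = ∑ₙ g n · f n` is the natural pairing.  Given a well `C`-complemented
disjointly supported family `(y_m)` with good projecting functionals `(g_m)`, and
`(u_m)`, `(h_m)` satisfying `|u_m(n)| ≤ D₁|y_m(n)|`, `|h_m(n)| ≤ D₂|g_m(n)|` and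
`|⟨h_m,u_m⟩| ≥ 1/D₃`, every finitely supported scalar family `c` satisfies
`N(∑ c_m u_m) ≤ D₁K·N(∑ c_m y_m)` and `N(∑ c_m y_m) ≤ CD₂D₃K²·N(∑ c_m u_m)`. -/
theorem stmt19 {ι : Type} [DecidableEq ι] [Countable ι]
    (K C D₁ D₂ D₃ : ℝ) (hK : 1 ≤ K) (hC : 1 ≤ C)
    (hD₁ : 0 < D₁) (hD₂ : 0 < D₂) (hD₃ : 0 < D₃)
    (N : (ℕ →₀ ℝ) → ℝ) (hN : IsCoeffQuasiNorm K N)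
    (y g u h : ι → (ℕ →₀ ℝ))
    (hydisj : ∀ i j, i ≠ j → Disjoint (y i).support (y j).support)
    (hgsupp : ∀ m, (g m).support ⊆ (y m).support)
    (hbi : ∀ m m', (∑ n ∈ (g m).support, g m n * y m' n) =
      if m = m' then 1 else 0)
    (hcompl : ∀ (f : ℕ →₀ ℝ) (M' : Finset ι),
      N (∑ m ∈ M', (∑ n ∈ (g m).support, g m n * f n) • y m) ≤ C * N f)
    (hu : ∀ m n, |u m n| ≤ D₁ * |y m n|)
    (hh : ∀ m n, |h m n| ≤ D₂ * |g m n|)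
    (hlb : ∀ m, 1 / D₃ ≤ |∑ n ∈ (h m).support, h m n * u m n|) :
    ∀ c : ι →₀ ℝ,
      N (∑ m ∈ c.support, c m • u m) ≤
        D₁ * K * N (∑ m ∈ c.support, c m • y m) ∧
      N (∑ m ∈ c.support, c m • y m) ≤
        C * D₂ * D₃ * K ^ 2 * N (∑ m ∈ c.support, c m • u m) := by
  intro c
  set S := c.support with hS
  -- support facts
  have huy : ∀ m n, y m n = 0 → u m n = 0 := by
    intro m n hy
    have := hu m n
    rw [hy, abs_zero, mul_zero] at this
    exact abs_eq_zero.mp (le_antisymm this (abs_nonneg _))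
  have hhg : ∀ m n, g m n = 0 → h m n = 0 := by
    intro m n hg
    have := hh m n
    rw [hg, abs_zero, mul_zero] at this
    exact abs_eq_zero.mp (le_antisymm this (abs_nonneg _))
  have hgy : ∀ m n, y m n = 0 → g m n = 0 := by
    intro m n hy
    by_contra hne
    exact (Finsupp.mem_support_iff.mp
      (hgsupp m (Finsupp.mem_support_iff.mpr hne))) hy
  have hhy : ∀ m n, y m n = 0 → h m n = 0 := fun m n hy => hhg m n (hgy m n hy)
  set fu := ∑ m ∈ S, c m • u m with hfu
  set fy := ∑ m ∈ S, c m • y m with hfy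
  -- Part (b)
  have partb : N fu ≤ D₁ * K * N fy := by
    have hpt : ∀ n, |fu n| ≤ |(D₁ • fy) n| := by
      intro n
      rw [Finsupp.smul_apply, smul_eq_mul, abs_mul, abs_of_pos hD₁]
      by_cases hz : ∀ m ∈ S, y m n = 0
      · rw [hfu, hfy, stmt19_zero_term S c u y huy n hz,
          stmt19_zero_term S c y y (fun _ _ hy => hy) n hz]
        simp
      · push_neg at hz
        obtain ⟨m₀, hm₀, hy₀⟩ := hz
        rw [hfu, hfy,
          stmt19_single_term S c u y huy hydisj n m₀ hm₀ hy₀,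
          stmt19_single_term S c y y (fun _ _ hy => hy) hydisj n m₀ hm₀ hy₀,
          abs_mul, abs_mul]
        exact le_trans (mul_le_mul_of_nonneg_left (hu m₀ n) (abs_nonneg _))
          (by ring_nf; exact le_of_eq rfl)
    calc N fu ≤ K * N (D₁ • fy) := hN.uncond _ _ hpt
      _ = K * (|D₁| * N fy) := by rw [hN.smul]
      _ = D₁ * K * N fy := by rw [abs_of_pos hD₁]; ring
  constructor
  · exact partb
  -- Part (c)
  · set a : ι → ℝ := fun m => ∑ n ∈ (h m).support, h m n * u m n with ha
    have haD : ∀ m, 1 / D₃ ≤ |a m| := hlb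
    have hane : ∀ m, a m ≠ 0 := by
      intro m hm0
      have := haD m
      rw [hm0, abs_zero] at this
      exact absurd this (not_le.mpr (by positivity))
    -- the auxiliary function w m
    set w : ι → (ℕ →₀ ℝ) := fun m =>
      Finsupp.onFinset (g m).support
        (fun n => h m n * fu n / (a m * g m n))
        (by
          intro n hn
          rw [Finsupp.mem_support_iff]
          intro hg
          apply hn
          show h m n * fu n / (a m * g m n) = 0
          rw [hhg m n hg]
          simp) with hw
    have hwval : ∀ m n, w m n = h m n * fu n / (a m * g m n) := fun m n => rfl
    have hwy : ∀ m n, y m n = 0 → w m n = 0 := by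
      intro m n hy
      rw [hwval, hhy m n hy]
      simp
    set f' := ∑ m ∈ S, (1 : ι → ℝ) m • w m with hf'
    -- ⟨g m, f'⟩ = c m for m ∈ S
    have hgf' : ∀ m ∈ S, (∑ n ∈ (g m).support, g m n * f' n) = c m := by
      intro m hm
      have hstep : ∀ n ∈ (g m).support, g m n * f' n = h m n * fu n / a m := by
        intro n hn
        have hgn : g m n ≠ 0 := Finsupp.mem_support_iff.mp hn
        have hyn : y m n ≠ 0 := Finsupp.mem_support_iff.mp (hgsupp m hn)
        have : f' n = (1 : ι → ℝ) m * w m n :=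
          stmt19_single_term S _ w y hwy hydisj n m hm hyn
        rw [this]
        simp only [Pi.one_apply, one_mul]
        rw [hwval, ← mul_div_assoc, mul_comm (a m) (g m n),
          mul_div_mul_left _ _ hgn]
      rw [Finset.sum_congr rfl hstep]
      -- now compute fu n on supp g m : fu n = c m * u m n
      have hstep2 : ∀ n ∈ (g m).support, h m n * fu n / a m
          = (c m / a m) * (h m n * u m n) := by
        intro n hn
        have hyn : y m n ≠ 0 := Finsupp.mem_support_iff.mp (hgsupp m hn)
        have : fu n = c m * u m n :=
          stmt19_single_term S c u y huy hydisj n m hm hyn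
        rw [this]; ring
      rw [Finset.sum_congr rfl hstep2, ← Finset.mul_sum]
      have hsub : (∑ n ∈ (g m).support, h m n * u m n) = a m := by
        rw [ha]
        refine (Finset.sum_subset ?_ ?_).symm
        · intro n hn
          refine Finsupp.mem_support_iff.mpr fun hg => ?_
          exact (Finsupp.mem_support_iff.mp hn) (hhg m n hg)
        · intro n _ hn
          rw [Finsupp.notMem_support_iff.mp hn, zero_mul]
      rw [hsub, div_mul_cancel₀ _ (hane m)]
    -- pointwise bound |f' n| ≤ (D₂ * D₃) |fu n|
    have hpt : ∀ n, |f' n| ≤ |((D₂ * D₃) • fu) n| := by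
      intro n
      rw [Finsupp.smul_apply, smul_eq_mul, abs_mul,
        abs_of_pos (mul_pos hD₂ hD₃)]
      by_cases hz : ∀ m ∈ S, y m n = 0
      · rw [hf', stmt19_zero_term S _ w y hwy n hz]
        simp [abs_nonneg, mul_nonneg (mul_pos hD₂ hD₃).le (abs_nonneg _)]
      · push_neg at hz
        obtain ⟨m₀, hm₀, hy₀⟩ := hz
        rw [hf', stmt19_single_term S _ w y hwy hydisj n m₀ hm₀ hy₀]
        simp only [Pi.one_apply, one_mul]
        rw [hwval]
        by_cases hgn : g m₀ n = 0
        · rw [hhg m₀ n hgn]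
          simp [mul_nonneg (mul_pos hD₂ hD₃).le (abs_nonneg _)]
        · have h1 : |h m₀ n| ≤ D₂ * |g m₀ n| := hh m₀ n
          have h2 : 1 / D₃ ≤ |a m₀| := haD m₀
          have hgpos : 0 < |g m₀ n| := abs_pos.mpr hgn
          have hapos : 0 < |a m₀| := lt_of_lt_of_le (by positivity) h2
          have h3 : 1 ≤ D₃ * |a m₀| := by
            rw [div_le_iff₀ hD₃] at h2; nlinarith
          rw [abs_div, abs_mul, abs_mul,
            div_le_iff₀ (mul_pos hapos hgpos)]
          nlinarith [mul_le_mul_of_nonneg_right h1 (abs_nonneg (fu n)),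
            mul_le_mul_of_nonneg_right h3
              (mul_nonneg (mul_nonneg hD₂.le hgpos.le) (abs_nonneg (fu n)))]
      -- end pointwise
    have key : N fy ≤ C * N f' := by
      have : fy = ∑ m ∈ S, (∑ n ∈ (g m).support, g m n * f' n) • y m := by
        rw [hfy]
        exact Finset.sum_congr rfl (fun m hm => by rw [hgf' m hm])
      rw [this]
      exact hcompl f' S
    have hNf' : N f' ≤ K * ((D₂ * D₃) * N fu) := by
      calc N f' ≤ K * N ((D₂ * D₃) • fu) := hN.uncond _ _ hpt
        _ = K * (|D₂ * D₃| * N fu) := by rw [hN.smul]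
        _ = K * ((D₂ * D₃) * N fu) := by
            rw [abs_of_pos (mul_pos hD₂ hD₃)]
    have hNfu : 0 ≤ N fu := hN.nonneg _
    have hNfin : N fy ≤ C * (K * ((D₂ * D₃) * N fu)) :=
      le_trans key (mul_le_mul_of_nonneg_left hNf' (by linarith))
    have hfinal : C * (K * ((D₂ * D₃) * N fu)) ≤
        C * D₂ * D₃ * K ^ 2 * N fu := by
      have hK1 : K ≤ K ^ 2 := by nlinarith
      have : C * K * D₂ * D₃ * N fu ≤ C * D₂ * D₃ * K ^ 2 * N fu := by
        have hCp : 0 < C := lt_of_lt_of_le one_pos hC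
        nlinarith [mul_nonneg (mul_nonneg (mul_nonneg hCp.le hD₂.le) hD₃.le) hNfu]
      linarith [this, (by ring : C * (K * ((D₂ * D₃) * N fu)) = C * K * D₂ * D₃ * N fu)]
    exact le_trans hNfin hfinal
end
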